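/- arXiv:1406.2664 — 4 statements merged into one kernel-verified Lean document; each statement's English description precedes it below -/
import Mathlib

section
/- Let m₁, m₂, m₃, m₄ > 0 and let k ≥ 0 be an integer. Then ∫_{(0,∞)³} (m₄² + m₁²x₁ + m₂²x₂ + m₃²x₃)^{−(k+1)} (1 + 1/x₁ + 1/x₂ + 1/x₃)^{−(k+1)} dx₁dx₂dx₃/(x₁x₂x₃) = (2⁴/(k!)²) ∫₀^∞ (x/2)^{2k+1} K₀(m₁x)K₀(m₂x)K₀(m₃x)K₀(m₄x) dx. -/
open MeasureTheory
open Set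
open scoped ENNReal

/-- Modified Bessel function of the second kind of order 0:
`K₀(y) = (1/2)∫₀^∞ exp(−(y/2)(u + 1/u)) du/u`. -/
noncomputable def K0 (y : ℝ) : ℝ :=
  (1/2) * ∫ u in Set.Ioi (0:ℝ), Real.exp (-(y/2) * (u + 1/u)) / u

theorem lint_image {s : Set ℝ} {f f' : ℝ → ℝ} (hs : MeasurableSet s)
    (hf' : ∀ x ∈ s, HasDerivWithinAt f (f' x) s x) (hf : InjOn f s) (g : ℝ → ℝ≥0∞) :
    ∫⁻ x in f '' s, g x = ∫⁻ x in s, ENNReal.ofReal |f' x| * g (f x) := by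
  simpa only [ContinuousLinearMap.det_toSpanSingleton] using
    lintegral_image_eq_lintegral_abs_det_fderiv_mul volume hs
      (fun x hx => (hf' x hx).hasFDerivWithinAt) hf g

lemma image_mul_Ioi {c : ℝ} (hc : 0 < c) : (fun x => c * x) '' Ioi (0:ℝ) = Ioi 0 := by
  ext y
  constructor
  · rintro ⟨x, hx, rfl⟩; exact mul_pos hc hx
  · intro hy; exact ⟨y / c, div_pos hy hc, by field_simp⟩

lemma image_sq_Ioi {c : ℝ} (hc : 0 < c) : (fun x => c * x ^ 2) '' Ioi (0:ℝ) = Ioi 0 := by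
  ext y
  constructor
  · rintro ⟨x, hx, rfl⟩; exact mul_pos hc (pow_pos hx 2)
  · intro hy
    refine ⟨Real.sqrt (y / c), Real.sqrt_pos.2 (div_pos hy hc), ?_⟩
    simp only []
    rw [Real.sq_sqrt (div_pos hy hc).le]
    field_simp

lemma lint_sub_mul {c : ℝ} (hc : 0 < c) (g : ℝ → ℝ≥0∞) :
    ∫⁻ s in Ioi (0:ℝ), g s = ∫⁻ u in Ioi (0:ℝ), ENNReal.ofReal c * g (c * u) := by
  conv_lhs => rw [← image_mul_Ioi hc]
  rw [lint_image (f' := fun _ => c) measurableSet_Ioi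
      (fun x _ => by simpa using ((hasDerivAt_id x).const_mul c).hasDerivWithinAt)
      (fun a _ b _ h => mul_left_cancel₀ hc.ne' h) g]
  simp [abs_of_pos hc]

lemma lint_sub_sq {c : ℝ} (hc : 0 < c) (g : ℝ → ℝ≥0∞) :
    ∫⁻ s in Ioi (0:ℝ), g s = ∫⁻ x in Ioi (0:ℝ), ENNReal.ofReal (2 * c * x) * g (c * x ^ 2) := by
  conv_lhs => rw [← image_sq_Ioi hc]
  rw [lint_image (f' := fun x => 2 * c * x) measurableSet_Ioi
      (fun x _ => by
        have := ((hasDerivAt_pow 2 x).const_mul c).hasDerivWithinAt (s := Ioi (0:ℝ))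
        exact this.congr_deriv (by ring))
      (fun a ha b hb h => by
        have h2 : a ^ 2 = b ^ 2 := mul_left_cancel₀ hc.ne' h
        have h3 : (a - b) * (a + b) = 0 := by linear_combination h2
        rcases mul_eq_zero.1 h3 with h4 | h4
        · linarith
        · have ha' := mem_Ioi.1 ha; have hb' := mem_Ioi.1 hb; linarith) g]
  refine setLIntegral_congr_fun measurableSet_Ioi (fun x hx => ?_)
  have hx' := mem_Ioi.1 hx
  rw [abs_of_pos (by positivity : (0:ℝ) < 2 * c * x)]

lemma K0_nonneg (y : ℝ) : 0 ≤ K0 y :=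
  mul_nonneg (by norm_num) (setIntegral_nonneg measurableSet_Ioi fun u hu =>
    div_nonneg (Real.exp_nonneg _) (le_of_lt hu))

@[fun_prop] lemma measurable_K0 : Measurable K0 := by
  have h : StronglyMeasurable fun p : ℝ × ℝ => Real.exp (-(p.1/2) * (p.2 + 1/p.2)) / p.2 := by
    apply Measurable.stronglyMeasurable
    measurability
  have := h.integral_prod_right' (ν := volume.restrict (Ioi 0))
  exact (measurable_const.mul this.measurable :)

-- integrand bound: for y > 0, exp (-(b/y)) / y ≤ 1 / (e * b)
lemma exp_div_le {b y : ℝ} (hb : 0 < b) (hy : 0 < y) :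
    Real.exp (-(b / y)) / y ≤ (Real.exp 1 * b)⁻¹ := by
  rw [Real.exp_neg]
  have h0 : 0 < b / y := div_pos hb hy
  have h1 : b / y ≤ Real.exp (b / y - 1) := by
    have := Real.add_one_le_exp (b / y - 1); linarith
  have h2 : Real.exp (b / y - 1) * Real.exp 1 = Real.exp (b / y) := by
    rw [← Real.exp_add]; ring_nf
  have h3 : Real.exp 1 * b ≤ Real.exp (b / y) * y := by
    calc Real.exp 1 * b = b / y * Real.exp 1 * y := by field_simp
      _ ≤ Real.exp (b / y - 1) * Real.exp 1 * y := by gcongr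
      _ = Real.exp (b / y) * y := by rw [h2]
  rw [div_eq_mul_inv, ← mul_inv]
  exact inv_anti₀ (by positivity) h3

lemma integrableOn_B {a b : ℝ} (ha : 0 < a) (hb : 0 < b) :
    IntegrableOn (fun y => Real.exp (-(a * y + b / y)) / y) (Ioi 0) := by
  have hmono : ∀ y ∈ Ioi (0:ℝ), ‖Real.exp (-(a * y + b / y)) / y‖ ≤
      (Real.exp 1 * b)⁻¹ * Real.exp (-a * y) := by
    intro y hy
    have hy' : (0:ℝ) < y := hy
    rw [Real.norm_of_nonneg (by positivity)]
    have : Real.exp (-(a * y + b / y)) / y = Real.exp (-(a*y)) * (Real.exp (-(b/y)) / y) := by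
      rw [neg_add, Real.exp_add]; ring
    rw [this]
    have h2 := exp_div_le hb hy'
    calc Real.exp (-(a*y)) * (Real.exp (-(b/y)) / y) ≤ Real.exp (-(a*y)) * (Real.exp 1 * b)⁻¹ :=
          mul_le_mul_of_nonneg_left h2 (Real.exp_nonneg _)
      _ = (Real.exp 1 * b)⁻¹ * Real.exp (-a * y) := by rw [neg_mul]; ring
  refine Integrable.mono' ((exp_neg_integrableOn_Ioi 0 ha).const_mul ((Real.exp 1 * b)⁻¹)) ?_
    ((ae_restrict_iff' measurableSet_Ioi).2 (Filter.Eventually.of_forall hmono))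
  exact ((Real.measurable_exp.comp (((measurable_const.mul measurable_id).add
    (measurable_const.div measurable_id)).neg)).div measurable_id).aestronglyMeasurable

lemma intB {a b : ℝ} (ha : 0 < a) (hb : 0 < b) :
    ∫ y in Ioi (0:ℝ), Real.exp (-(a * y + b / y)) / y = 2 * K0 (2 * Real.sqrt (a * b)) := by
  set c := Real.sqrt (b / a) with hc
  have hc0 : 0 < c := Real.sqrt_pos.2 (div_pos hb ha)
  have hac : a * c = Real.sqrt (a * b) := by
    rw [hc, ← Real.sqrt_sq ha.le, ← Real.sqrt_mul (sq_nonneg a)]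
    congr 1
    field_simp
    rw [Real.sq_sqrt (sq_nonneg a)]
  have hbc : b / c = Real.sqrt (a * b) := by
    rw [hc, ← Real.sqrt_sq hb.le, ← Real.sqrt_div (sq_nonneg b)]
    congr 1
    rw [div_div_eq_mul_div]
    field_simp
    rw [Real.sq_sqrt (sq_nonneg b)]
  have key := integral_comp_mul_left_Ioi (fun y => Real.exp (-(a * y + b / y)) / y) 0 hc0
  rw [mul_zero] at key
  have step : ∫ y in Ioi (0:ℝ), Real.exp (-(a * y + b / y)) / y
      = c * ∫ x in Ioi (0:ℝ), Real.exp (-(a * (c * x) + b / (c * x))) / (c * x) := by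
    rw [key, smul_eq_mul, ← mul_assoc, mul_inv_cancel₀ hc0.ne', one_mul]
  rw [step, ← MeasureTheory.integral_const_mul]
  have step2 : ∀ x ∈ Ioi (0:ℝ), c * (Real.exp (-(a * (c * x) + b / (c * x))) / (c * x))
      = Real.exp (-(2 * Real.sqrt (a * b) / 2) * (x + 1 / x)) / x := by
    intro x hx
    have hx0 : (0:ℝ) < x := hx
    have hexp : -(a * (c * x) + b / (c * x)) = -(2 * Real.sqrt (a * b) / 2) * (x + 1 / x) := by
      rw [show a * (c * x) = a * c * x by ring, hac, div_mul_eq_div_div, hbc]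
      ring
    rw [hexp]
    field_simp
  rw [setIntegral_congr_fun measurableSet_Ioi step2, K0]
  ring

lemma lintB {a b : ℝ} (ha : 0 < a) (hb : 0 < b) :
    ∫⁻ y in Ioi (0:ℝ), ENNReal.ofReal (Real.exp (-(a * y + b / y)) / y)
      = ENNReal.ofReal (2 * K0 (2 * Real.sqrt (a * b))) := by
  rw [← intB ha hb]
  rw [← ofReal_integral_eq_lintegral_ofReal (integrableOn_B ha hb)
    ((ae_restrict_iff' measurableSet_Ioi).2 (Filter.Eventually.of_forall fun y hy =>
      div_nonneg (Real.exp_nonneg _) (le_of_lt hy)))]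

lemma intA (k : ℕ) {A : ℝ} (hA : 0 < A) :
    ∫ t in Ioi (0:ℝ), t ^ k * Real.exp (-(A * t)) = (k.factorial : ℝ) / A ^ (k + 1) := by
  have h := Real.integral_rpow_mul_exp_neg_mul_Ioi (a := (k:ℝ) + 1) (r := A)
    (by positivity) hA
  have e1 : ∀ t ∈ Ioi (0:ℝ),
      t ^ ((k:ℝ) + 1 - 1) * Real.exp (-(A * t)) = t ^ k * Real.exp (-(A * t)) := fun t ht => by
    rw [add_sub_cancel_right, Real.rpow_natCast]
  rw [setIntegral_congr_fun measurableSet_Ioi e1] at h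
  rw [h, Real.Gamma_nat_eq_factorial,
    show ((k:ℝ) + 1) = ((k + 1 : ℕ) : ℝ) by push_cast; ring, Real.rpow_natCast,
    div_pow, one_pow]
  ring

lemma integrableOn_A (k : ℕ) {A : ℝ} (hA : 0 < A) :
    IntegrableOn (fun t => t ^ k * Real.exp (-(A * t))) (Ioi (0:ℝ)) := by
  have h := integrableOn_rpow_mul_exp_neg_mul_rpow (p := 1) (s := (k:ℝ)) (b := A)
    (lt_of_lt_of_le neg_one_lt_zero (Nat.cast_nonneg k)) one_pos hA
  refine h.congr_fun (fun t ht => ?_) measurableSet_Ioi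
  beta_reduce
  rw [Real.rpow_one, Real.rpow_natCast, neg_mul]

lemma lintA (k : ℕ) {A : ℝ} (hA : 0 < A) :
    ENNReal.ofReal ((A ^ (k + 1))⁻¹)
      = ((k.factorial : ℝ≥0∞))⁻¹
        * ∫⁻ t in Ioi (0:ℝ), ENNReal.ofReal (t ^ k * Real.exp (-(A * t))) := by
  rw [← ofReal_integral_eq_lintegral_ofReal (integrableOn_A k hA)
    ((ae_restrict_iff' measurableSet_Ioi).2 (Filter.Eventually.of_forall fun t ht => by
      have : (0:ℝ) < t := ht
      positivity)), intA k hA]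
  have hk0 : ((k.factorial : ℝ≥0∞)) ≠ 0 := Nat.cast_ne_zero.2 k.factorial_ne_zero
  have hkt : ((k.factorial : ℝ≥0∞)) ≠ ⊤ := ENNReal.natCast_ne_top _
  rw [ENNReal.ofReal_div_of_pos (by positivity), ENNReal.ofReal_natCast,
    ENNReal.ofReal_inv_of_pos (by positivity), div_eq_mul_inv, ← mul_assoc,
    ENNReal.inv_mul_cancel hk0 hkt, one_mul]

lemma swap2 (f : ℝ → ℝ → ℝ≥0∞) (hf : Measurable (Function.uncurry f)) :
    ∫⁻ x in Ioi (0:ℝ), ∫⁻ y in Ioi (0:ℝ), f x y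
      = ∫⁻ y in Ioi (0:ℝ), ∫⁻ x in Ioi (0:ℝ), f x y :=
  lintegral_lintegral_swap hf.aemeasurable

lemma swap3 (H : ℝ → ℝ → ℝ → ℝ≥0∞)
    (hH : Measurable fun p : ℝ × ℝ × ℝ => H p.1 p.2.1 p.2.2) :
    ∫⁻ x in Ioi (0:ℝ), ∫⁻ t in Ioi (0:ℝ), ∫⁻ s in Ioi (0:ℝ), H x t s
      = ∫⁻ t in Ioi (0:ℝ), ∫⁻ s in Ioi (0:ℝ), ∫⁻ x in Ioi (0:ℝ), H x t s := by
  have m1 : Measurable (Function.uncurry fun x t => ∫⁻ s in Ioi (0:ℝ), H x t s) := by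
    apply Measurable.lintegral_prod_right'
      (f := fun q : (ℝ × ℝ) × ℝ => H q.1.1 q.1.2 q.2)
    exact hH.comp ((measurable_fst.comp measurable_fst).prodMk
      ((measurable_snd.comp measurable_fst).prodMk measurable_snd))
  rw [swap2 _ m1]
  refine lintegral_congr fun t => ?_
  exact swap2 (fun x s => H x t s)
    (hH.comp (measurable_fst.prodMk (measurable_const.prodMk measurable_snd)))

lemma lint_triple (F : ℝ × ℝ × ℝ → ℝ≥0∞) (hF : Measurable F) :
    ∫⁻ p in Ioi (0:ℝ) ×ˢ (Ioi (0:ℝ) ×ˢ Ioi (0:ℝ)), F p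
      = ∫⁻ x in Ioi (0:ℝ), ∫⁻ y in Ioi (0:ℝ), ∫⁻ z in Ioi (0:ℝ), F (x, y, z) := by
  have hmeq : (volume.restrict (Ioi (0:ℝ))).prod
      ((volume.restrict (Ioi (0:ℝ))).prod (volume.restrict (Ioi (0:ℝ))))
      = (volume : Measure (ℝ × ℝ × ℝ)).restrict (Ioi 0 ×ˢ (Ioi 0 ×ˢ Ioi 0)) := by
    rw [Measure.prod_restrict, ← Measure.volume_eq_prod, Measure.prod_restrict,
      ← Measure.volume_eq_prod]
  rw [← hmeq, lintegral_prod _ hF.aemeasurable]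
  refine lintegral_congr fun x => ?_
  exact lintegral_prod _ (hF.comp measurable_prodMk_left).aemeasurable

noncomputable def Wfun (m₁ m₂ m₃ m₄ : ℝ) (k : ℕ) (x₁ x₂ x₃ t s : ℝ) : ℝ≥0∞ :=
  ENNReal.ofReal (t ^ k * Real.exp (-((m₄^2 + m₁^2*x₁ + m₂^2*x₂ + m₃^2*x₃) * t))
    * (s ^ k * Real.exp (-((1 + 1/x₁ + 1/x₂ + 1/x₃) * s))) / (x₁ * x₂ * x₃))

noncomputable def Phif (m₁ m₂ m₃ m₄ : ℝ) (k : ℕ) (t s : ℝ) : ℝ≥0∞ :=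
  ENNReal.ofReal (t ^ k * Real.exp (-(m₄^2 * t)) * (s ^ k * Real.exp (-s)))
    * ENNReal.ofReal (2 * K0 (2 * Real.sqrt (t * m₁^2 * s)))
    * ENNReal.ofReal (2 * K0 (2 * Real.sqrt (t * m₂^2 * s)))
    * ENNReal.ofReal (2 * K0 (2 * Real.sqrt (t * m₃^2 * s)))

@[fun_prop] lemma measurable_Wfun (m₁ m₂ m₃ m₄ : ℝ) (k : ℕ) :
    Measurable fun p : ℝ × ℝ × ℝ × ℝ × ℝ =>
      Wfun m₁ m₂ m₃ m₄ k p.1 p.2.1 p.2.2.1 p.2.2.2.1 p.2.2.2.2 := by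
  unfold Wfun; fun_prop

@[fun_prop] lemma measurable_Phif (m₁ m₂ m₃ m₄ : ℝ) (k : ℕ) :
    Measurable fun p : ℝ × ℝ => Phif m₁ m₂ m₃ m₄ k p.1 p.2 := by
  unfold Phif; fun_prop

lemma step1 {m₁ m₂ m₃ m₄ : ℝ} (h₁ : 0 < m₁) (h₂ : 0 < m₂) (h₃ : 0 < m₃) (h₄ : 0 < m₄)
    (k : ℕ) {x₁ x₂ x₃ : ℝ} (hx₁ : 0 < x₁) (hx₂ : 0 < x₂) (hx₃ : 0 < x₃) :
    ENNReal.ofReal ((((m₄^2 + m₁^2*x₁ + m₂^2*x₂ + m₃^2*x₃)^(k+1)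
        * (1 + 1/x₁ + 1/x₂ + 1/x₃)^(k+1))⁻¹) / (x₁ * x₂ * x₃))
      = (k.factorial : ℝ≥0∞)⁻¹ * (k.factorial : ℝ≥0∞)⁻¹
        * ∫⁻ t in Ioi (0:ℝ), ∫⁻ s in Ioi (0:ℝ), Wfun m₁ m₂ m₃ m₄ k x₁ x₂ x₃ t s := by
  set A := m₄^2 + m₁^2*x₁ + m₂^2*x₂ + m₃^2*x₃ with hAdef
  set B := 1 + 1/x₁ + 1/x₂ + 1/x₃ with hBdef
  have hA : 0 < A := by positivity
  have hB : 0 < B := by positivity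
  have hsplit : ENNReal.ofReal (((A^(k+1) * B^(k+1))⁻¹) / (x₁ * x₂ * x₃))
      = ENNReal.ofReal ((A^(k+1))⁻¹) * ENNReal.ofReal ((B^(k+1))⁻¹)
        * ENNReal.ofReal ((x₁ * x₂ * x₃)⁻¹) := by
    rw [← ENNReal.ofReal_mul (by positivity), ← ENNReal.ofReal_mul (by positivity)]
    rw [mul_inv, div_eq_mul_inv]
  rw [hsplit, lintA k hA, lintA k hB]
  have h : (∫⁻ t in Ioi (0:ℝ), ∫⁻ s in Ioi (0:ℝ), Wfun m₁ m₂ m₃ m₄ k x₁ x₂ x₃ t s)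
      = (∫⁻ t in Ioi (0:ℝ), ENNReal.ofReal (t ^ k * Real.exp (-(A * t))))
        * (∫⁻ s in Ioi (0:ℝ), ENNReal.ofReal (s ^ k * Real.exp (-(B * s))))
        * ENNReal.ofReal ((x₁ * x₂ * x₃)⁻¹) := by
    have hinner : ∀ t ∈ Ioi (0:ℝ),
        (∫⁻ s in Ioi (0:ℝ), Wfun m₁ m₂ m₃ m₄ k x₁ x₂ x₃ t s)
          = (ENNReal.ofReal (t ^ k * Real.exp (-(A * t)))
              * ENNReal.ofReal ((x₁ * x₂ * x₃)⁻¹))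
            * ∫⁻ s in Ioi (0:ℝ), ENNReal.ofReal (s ^ k * Real.exp (-(B * s))) := by
      intro t ht
      have ht' : (0:ℝ) < t := ht
      rw [← lintegral_const_mul _ (by fun_prop)]
      refine setLIntegral_congr_fun measurableSet_Ioi
        (fun s hs => ?_)
      rw [Wfun, ← ENNReal.ofReal_mul (by positivity), ← ENNReal.ofReal_mul (by positivity)]
      congr 1
      rw [div_eq_mul_inv]
      ring
    rw [setLIntegral_congr_fun measurableSet_Ioi hinner]
    rw [lintegral_mul_const _ (by fun_prop : Measurable fun t : ℝ =>
      ENNReal.ofReal (t ^ k * Real.exp (-(A * t))) * ENNReal.ofReal ((x₁ * x₂ * x₃)⁻¹))]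
    rw [lintegral_mul_const _ (by fun_prop : Measurable fun t : ℝ =>
      ENNReal.ofReal (t ^ k * Real.exp (-(A * t))))]
    ring
  rw [h]
  ring

lemma step3 {m₁ m₂ m₃ m₄ : ℝ} (h₁ : 0 < m₁) (h₂ : 0 < m₂) (h₃ : 0 < m₃) (h₄ : 0 < m₄)
    (k : ℕ) {t s : ℝ} (ht : 0 < t) (hs : 0 < s) :
    (∫⁻ x₁ in Ioi (0:ℝ), ∫⁻ x₂ in Ioi (0:ℝ), ∫⁻ x₃ in Ioi (0:ℝ),
        Wfun m₁ m₂ m₃ m₄ k x₁ x₂ x₃ t s)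
      = Phif m₁ m₂ m₃ m₄ k t s := by
  have hpoint : ∀ x₁ x₂ x₃ : ℝ,
      t ^ k * Real.exp (-((m₄^2 + m₁^2*x₁ + m₂^2*x₂ + m₃^2*x₃) * t))
        * (s ^ k * Real.exp (-((1 + 1/x₁ + 1/x₂ + 1/x₃) * s))) / (x₁ * x₂ * x₃)
      = (t ^ k * Real.exp (-(m₄^2 * t)) * (s ^ k * Real.exp (-s)))
        * (Real.exp (-(t*m₁^2*x₁ + s/x₁)) / x₁)
        * (Real.exp (-(t*m₂^2*x₂ + s/x₂)) / x₂)
        * (Real.exp (-(t*m₃^2*x₃ + s/x₃)) / x₃) := by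
    intro x₁ x₂ x₃
    have hexp : -((m₄^2 + m₁^2*x₁ + m₂^2*x₂ + m₃^2*x₃) * t)
        + -((1 + 1/x₁ + 1/x₂ + 1/x₃) * s)
        = (-(m₄^2 * t) + -s) + (-(t*m₁^2*x₁ + s/x₁)
          + (-(t*m₂^2*x₂ + s/x₂) + -(t*m₃^2*x₃ + s/x₃))) := by
      ring
    calc t ^ k * Real.exp (-((m₄^2 + m₁^2*x₁ + m₂^2*x₂ + m₃^2*x₃) * t))
          * (s ^ k * Real.exp (-((1 + 1/x₁ + 1/x₂ + 1/x₃) * s))) / (x₁ * x₂ * x₃)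
        = t ^ k * s ^ k * (x₁ * x₂ * x₃)⁻¹
            * Real.exp (-((m₄^2 + m₁^2*x₁ + m₂^2*x₂ + m₃^2*x₃) * t)
              + -((1 + 1/x₁ + 1/x₂ + 1/x₃) * s)) := by
          rw [Real.exp_add]; ring
      _ = _ := by
          rw [hexp, Real.exp_add, Real.exp_add, Real.exp_add, Real.exp_add]
          ring
  have h3 : ∀ x₁ ∈ Ioi (0:ℝ), ∀ x₂ ∈ Ioi (0:ℝ),
      (∫⁻ x₃ in Ioi (0:ℝ), Wfun m₁ m₂ m₃ m₄ k x₁ x₂ x₃ t s)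
        = (ENNReal.ofReal (t ^ k * Real.exp (-(m₄^2 * t)) * (s ^ k * Real.exp (-s)))
            * ENNReal.ofReal (Real.exp (-(t*m₁^2*x₁ + s/x₁)) / x₁)
            * ENNReal.ofReal (Real.exp (-(t*m₂^2*x₂ + s/x₂)) / x₂))
          * ENNReal.ofReal (2 * K0 (2 * Real.sqrt (t * m₃^2 * s))) := by
    intro x₁ hx₁ x₂ hx₂
    have hx₁' : (0:ℝ) < x₁ := hx₁
    have hx₂' : (0:ℝ) < x₂ := hx₂
    calc (∫⁻ x₃ in Ioi (0:ℝ), Wfun m₁ m₂ m₃ m₄ k x₁ x₂ x₃ t s)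
        = ∫⁻ x₃ in Ioi (0:ℝ),
            (ENNReal.ofReal (t ^ k * Real.exp (-(m₄^2 * t)) * (s ^ k * Real.exp (-s)))
              * ENNReal.ofReal (Real.exp (-(t*m₁^2*x₁ + s/x₁)) / x₁)
              * ENNReal.ofReal (Real.exp (-(t*m₂^2*x₂ + s/x₂)) / x₂))
            * ENNReal.ofReal (Real.exp (-(t*m₃^2*x₃ + s/x₃)) / x₃) := by
          refine setLIntegral_congr_fun measurableSet_Ioi
            (fun x₃ hx₃ => ?_)
          have hx₃' : (0:ℝ) < x₃ := hx₃
          rw [Wfun, hpoint x₁ x₂ x₃, ENNReal.ofReal_mul (by positivity),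
            ENNReal.ofReal_mul (by positivity), ENNReal.ofReal_mul (by positivity)]
      _ = _ := by
          rw [lintegral_const_mul _ (by fun_prop), lintB (by positivity) hs]
  have h2 : ∀ x₁ ∈ Ioi (0:ℝ),
      (∫⁻ x₂ in Ioi (0:ℝ), ∫⁻ x₃ in Ioi (0:ℝ), Wfun m₁ m₂ m₃ m₄ k x₁ x₂ x₃ t s)
        = (ENNReal.ofReal (t ^ k * Real.exp (-(m₄^2 * t)) * (s ^ k * Real.exp (-s)))
            * ENNReal.ofReal (Real.exp (-(t*m₁^2*x₁ + s/x₁)) / x₁)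
            * ENNReal.ofReal (2 * K0 (2 * Real.sqrt (t * m₃^2 * s))))
          * ENNReal.ofReal (2 * K0 (2 * Real.sqrt (t * m₂^2 * s))) := by
    intro x₁ hx₁
    calc (∫⁻ x₂ in Ioi (0:ℝ), ∫⁻ x₃ in Ioi (0:ℝ), Wfun m₁ m₂ m₃ m₄ k x₁ x₂ x₃ t s)
        = ∫⁻ x₂ in Ioi (0:ℝ),
            (ENNReal.ofReal (t ^ k * Real.exp (-(m₄^2 * t)) * (s ^ k * Real.exp (-s)))
              * ENNReal.ofReal (Real.exp (-(t*m₁^2*x₁ + s/x₁)) / x₁)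
              * ENNReal.ofReal (2 * K0 (2 * Real.sqrt (t * m₃^2 * s))))
            * ENNReal.ofReal (Real.exp (-(t*m₂^2*x₂ + s/x₂)) / x₂) := by
          refine setLIntegral_congr_fun measurableSet_Ioi
            (fun x₂ hx₂ => ?_)
          rw [h3 x₁ hx₁ x₂ hx₂]
          ring
      _ = _ := by
          rw [lintegral_const_mul _ (by fun_prop), lintB (by positivity) hs]
  calc (∫⁻ x₁ in Ioi (0:ℝ), ∫⁻ x₂ in Ioi (0:ℝ), ∫⁻ x₃ in Ioi (0:ℝ),
          Wfun m₁ m₂ m₃ m₄ k x₁ x₂ x₃ t s)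
      = ∫⁻ x₁ in Ioi (0:ℝ),
          (ENNReal.ofReal (t ^ k * Real.exp (-(m₄^2 * t)) * (s ^ k * Real.exp (-s)))
            * ENNReal.ofReal (2 * K0 (2 * Real.sqrt (t * m₃^2 * s)))
            * ENNReal.ofReal (2 * K0 (2 * Real.sqrt (t * m₂^2 * s))))
          * ENNReal.ofReal (Real.exp (-(t*m₁^2*x₁ + s/x₁)) / x₁) := by
        refine setLIntegral_congr_fun measurableSet_Ioi
          (fun x₁ hx₁ => ?_)
        rw [h2 x₁ hx₁]
        ring
    _ = _ := by
        rw [lintegral_const_mul _ (by fun_prop), lintB (by positivity) hs]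
        rw [Phif]
        ring

lemma step4 {m₁ m₂ m₃ m₄ : ℝ} (h₁ : 0 < m₁) (h₂ : 0 < m₂) (h₃ : 0 < m₃) (h₄ : 0 < m₄)
    (k : ℕ) :
    (∫⁻ t in Ioi (0:ℝ), ∫⁻ s in Ioi (0:ℝ), Phif m₁ m₂ m₃ m₄ k t s)
      = 2^4 * ∫⁻ x in Ioi (0:ℝ), ENNReal.ofReal ((x/2)^(2*k+1)
          * (K0 (m₁*x) * K0 (m₂*x) * K0 (m₃*x) * K0 (m₄*x))) := by
  have hstep_a : (∫⁻ t in Ioi (0:ℝ), ∫⁻ s in Ioi (0:ℝ), Phif m₁ m₂ m₃ m₄ k t s)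
      = ∫⁻ t in Ioi (0:ℝ), ∫⁻ x in Ioi (0:ℝ),
          ENNReal.ofReal (2 * (1/(4*t)) * x) * Phif m₁ m₂ m₃ m₄ k t (1/(4*t) * x^2) := by
    refine setLIntegral_congr_fun measurableSet_Ioi
      (fun t ht => ?_)
    have ht' : (0:ℝ) < t := ht
    exact lint_sub_sq (by positivity) _
  rw [hstep_a]
  rw [swap2 _ (by unfold Phif; fun_prop)]
  have hstep_c : ∀ x ∈ Ioi (0:ℝ),
      (∫⁻ t in Ioi (0:ℝ),
          ENNReal.ofReal (2 * (1/(4*t)) * x) * Phif m₁ m₂ m₃ m₄ k t (1/(4*t) * x^2))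
        = ∫⁻ u in Ioi (0:ℝ), ENNReal.ofReal (x/2)
            * (ENNReal.ofReal (2 * (1/(4*((x/2)*u))) * x)
              * Phif m₁ m₂ m₃ m₄ k ((x/2)*u) (1/(4*((x/2)*u)) * x^2)) := by
    intro x hx
    have hx' : (0:ℝ) < x := hx
    exact lint_sub_mul (by positivity) _
  rw [setLIntegral_congr_fun measurableSet_Ioi hstep_c]
  have hstep_d : ∀ x ∈ Ioi (0:ℝ),
      (∫⁻ u in Ioi (0:ℝ), ENNReal.ofReal (x/2)
          * (ENNReal.ofReal (2 * (1/(4*((x/2)*u))) * x)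
            * Phif m₁ m₂ m₃ m₄ k ((x/2)*u) (1/(4*((x/2)*u)) * x^2)))
        = 2^4 * ENNReal.ofReal ((x/2)^(2*k+1)
            * (K0 (m₁*x) * K0 (m₂*x) * K0 (m₃*x) * K0 (m₄*x))) := by
    intro x hx
    have hx' : (0:ℝ) < x := hx
    have hpt : ∀ u ∈ Ioi (0:ℝ), ENNReal.ofReal (x/2)
        * (ENNReal.ofReal (2 * (1/(4*((x/2)*u))) * x)
          * Phif m₁ m₂ m₃ m₄ k ((x/2)*u) (1/(4*((x/2)*u)) * x^2))
        = (ENNReal.ofReal ((x/2)^(2*k) * (x/2))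
            * ENNReal.ofReal (2 * K0 (m₁*x)) * ENNReal.ofReal (2 * K0 (m₂*x))
            * ENNReal.ofReal (2 * K0 (m₃*x)))
          * ENNReal.ofReal (Real.exp (-((x*m₄^2/2)*u + (x/2)/u)) / u) := by
      intro u hu
      have hu' : (0:ℝ) < u := hu
      have hs' : 1/(4*((x/2)*u)) * x^2 = x/(2*u) := by field_simp; ring
      have hq : 2 * (1/(4*((x/2)*u))) * x = 1/u := by field_simp; ring
      have hsq : ∀ m : ℝ, 0 < m → 2 * Real.sqrt ((x/2)*u * m^2 * (1/(4*((x/2)*u)) * x^2))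
          = m * x := by
        intro m hm
        rw [show (x/2)*u * m^2 * (1/(4*((x/2)*u)) * x^2) = (m*x/2)^2 by field_simp; ring,
          Real.sqrt_sq (by positivity)]
        ring
      rw [Phif, hsq m₁ h₁, hsq m₂ h₂, hsq m₃ h₃, hs', hq]
      have hbase : ((x/2)*u)^k * (x/(2*u))^k = (x/2)^(2*k) := by
        rw [← mul_pow, show (x/2)*u*(x/(2*u)) = (x/2)^2 by field_simp, ← pow_mul]
      have hexp2 : Real.exp (-(m₄^2 * ((x/2)*u))) * Real.exp (-(x/(2*u)))
          = Real.exp (-((x*m₄^2/2)*u + (x/2)/u)) := by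
        rw [← Real.exp_add]
        congr 1
        field_simp
        ring
      have hw : (1/u : ℝ) * (((x/2)*u)^k * Real.exp (-(m₄^2 * ((x/2)*u)))
          * ((x/(2*u))^k * Real.exp (-(x/(2*u)))))
          = (x/2)^(2*k) * (Real.exp (-((x*m₄^2/2)*u + (x/2)/u)) / u) := by
        rw [show (1/u : ℝ) * (((x/2)*u)^k * Real.exp (-(m₄^2 * ((x/2)*u)))
              * ((x/(2*u))^k * Real.exp (-(x/(2*u)))))
            = (((x/2)*u)^k * (x/(2*u))^k)
              * (Real.exp (-(m₄^2 * ((x/2)*u))) * Real.exp (-(x/(2*u)))) * (1/u) by ring,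
          hbase, hexp2]
        ring
      calc ENNReal.ofReal (x/2) * (ENNReal.ofReal (1/u)
            * (ENNReal.ofReal (((x/2)*u)^k * Real.exp (-(m₄^2 * ((x/2)*u)))
                * ((x/(2*u))^k * Real.exp (-(x/(2*u)))))
              * ENNReal.ofReal (2 * K0 (m₁*x)) * ENNReal.ofReal (2 * K0 (m₂*x))
              * ENNReal.ofReal (2 * K0 (m₃*x))))
          = (ENNReal.ofReal (x/2) * ENNReal.ofReal ((1/u)
              * (((x/2)*u)^k * Real.exp (-(m₄^2 * ((x/2)*u)))
                * ((x/(2*u))^k * Real.exp (-(x/(2*u)))))))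
            * (ENNReal.ofReal (2 * K0 (m₁*x)) * ENNReal.ofReal (2 * K0 (m₂*x))
              * ENNReal.ofReal (2 * K0 (m₃*x))) := by
            rw [ENNReal.ofReal_mul (by positivity : (0:ℝ) ≤ 1/u)]
            ring
        _ = _ := by
            rw [hw, ENNReal.ofReal_mul (by positivity : (0:ℝ) ≤ (x/2)^(2*k)),
              ENNReal.ofReal_mul (by positivity : (0:ℝ) ≤ (x/2)^(2*k))]
            ring
    rw [setLIntegral_congr_fun measurableSet_Ioi hpt]
    rw [lintegral_const_mul _ (by fun_prop), lintB (by positivity) (by positivity)]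
    rw [show 2 * Real.sqrt ((x*m₄^2/2) * (x/2)) = m₄ * x by
      rw [show (x*m₄^2/2) * (x/2) = (m₄*x/2)^2 by ring, Real.sqrt_sq (by positivity)]; ring]
    have hK : ∀ y : ℝ, (0:ℝ) ≤ 2 * K0 y := fun y => mul_nonneg (by norm_num) (K0_nonneg _)
    rw [← ENNReal.ofReal_mul (by positivity : (0:ℝ) ≤ (x/2)^(2*k) * (x/2)),
      ← ENNReal.ofReal_mul (mul_nonneg (by positivity) (hK _)),
      ← ENNReal.ofReal_mul (mul_nonneg (mul_nonneg (by positivity) (hK _)) (hK _)),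
      ← ENNReal.ofReal_mul (mul_nonneg (mul_nonneg (mul_nonneg (by positivity) (hK _)) (hK _)) (hK _))]
    rw [show (x/2)^(2*k) * (x/2) * (2 * K0 (m₁*x)) * (2 * K0 (m₂*x)) * (2 * K0 (m₃*x))
          * (2 * K0 (m₄*x))
        = 16 * ((x/2)^(2*k+1) * (K0 (m₁*x) * K0 (m₂*x) * K0 (m₃*x) * K0 (m₄*x))) by
      rw [pow_add, pow_one]
      ring]
    rw [ENNReal.ofReal_mul (by norm_num)]
    norm_num
  rw [setLIntegral_congr_fun measurableSet_Ioi hstep_d]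
  rw [lintegral_const_mul _ (by fun_prop)]

lemma swapchain (m₁ m₂ m₃ m₄ : ℝ) (k : ℕ) :
    (∫⁻ x₁ in Ioi (0:ℝ), ∫⁻ x₂ in Ioi (0:ℝ), ∫⁻ x₃ in Ioi (0:ℝ), ∫⁻ t in Ioi (0:ℝ),
        ∫⁻ s in Ioi (0:ℝ), Wfun m₁ m₂ m₃ m₄ k x₁ x₂ x₃ t s)
      = ∫⁻ t in Ioi (0:ℝ), ∫⁻ s in Ioi (0:ℝ), ∫⁻ x₁ in Ioi (0:ℝ), ∫⁻ x₂ in Ioi (0:ℝ),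
        ∫⁻ x₃ in Ioi (0:ℝ), Wfun m₁ m₂ m₃ m₄ k x₁ x₂ x₃ t s := by
  calc (∫⁻ x₁ in Ioi (0:ℝ), ∫⁻ x₂ in Ioi (0:ℝ), ∫⁻ x₃ in Ioi (0:ℝ), ∫⁻ t in Ioi (0:ℝ),
        ∫⁻ s in Ioi (0:ℝ), Wfun m₁ m₂ m₃ m₄ k x₁ x₂ x₃ t s)
      = ∫⁻ x₁ in Ioi (0:ℝ), ∫⁻ x₂ in Ioi (0:ℝ), ∫⁻ t in Ioi (0:ℝ), ∫⁻ s in Ioi (0:ℝ),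
          ∫⁻ x₃ in Ioi (0:ℝ), Wfun m₁ m₂ m₃ m₄ k x₁ x₂ x₃ t s := by
        refine lintegral_congr fun x₁ => lintegral_congr fun x₂ => ?_
        exact swap3 _ (by unfold Wfun; fun_prop)
    _ = ∫⁻ x₁ in Ioi (0:ℝ), ∫⁻ t in Ioi (0:ℝ), ∫⁻ s in Ioi (0:ℝ), ∫⁻ x₂ in Ioi (0:ℝ),
          ∫⁻ x₃ in Ioi (0:ℝ), Wfun m₁ m₂ m₃ m₄ k x₁ x₂ x₃ t s := by
        refine lintegral_congr fun x₁ => ?_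
        refine swap3 (fun x₂ t s => ∫⁻ x₃ in Ioi (0:ℝ), Wfun m₁ m₂ m₃ m₄ k x₁ x₂ x₃ t s) ?_
        exact Measurable.lintegral_prod_right'
          (f := fun q : (ℝ × ℝ × ℝ) × ℝ => Wfun m₁ m₂ m₃ m₄ k x₁ q.1.1 q.2 q.1.2.1 q.1.2.2)
          (by unfold Wfun; fun_prop)
    _ = _ := by
        refine swap3 (fun x₁ t s => ∫⁻ x₂ in Ioi (0:ℝ), ∫⁻ x₃ in Ioi (0:ℝ),
          Wfun m₁ m₂ m₃ m₄ k x₁ x₂ x₃ t s) ?_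
        apply Measurable.lintegral_prod_right'
          (f := fun q : (ℝ × ℝ × ℝ) × ℝ => ∫⁻ x₃ in Ioi (0:ℝ),
            Wfun m₁ m₂ m₃ m₄ k q.1.1 q.2 x₃ q.1.2.1 q.1.2.2)
        apply Measurable.lintegral_prod_right'
          (f := fun r : ((ℝ × ℝ × ℝ) × ℝ) × ℝ =>
            Wfun m₁ m₂ m₃ m₄ k r.1.1.1 r.1.2 r.2 r.1.1.2.1 r.1.1.2.2)
        unfold Wfun; fun_prop

theorem stmt1 (m₁ m₂ m₃ m₄ : ℝ) (h₁ : 0 < m₁) (h₂ : 0 < m₂) (h₃ : 0 < m₃) (h₄ : 0 < m₄)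
    (k : ℕ) :
    (∫ p in Set.Ioi (0:ℝ) ×ˢ (Set.Ioi (0:ℝ) ×ˢ Set.Ioi (0:ℝ)),
      ((m₄^2 + m₁^2 * p.1 + m₂^2 * p.2.1 + m₃^2 * p.2.2)^(k+1) *
        (1 + 1/p.1 + 1/p.2.1 + 1/p.2.2)^(k+1))⁻¹ / (p.1 * p.2.1 * p.2.2)) =
    (2^4 / ((Nat.factorial k : ℝ))^2) * ∫ x in Set.Ioi (0:ℝ),
      (x/2)^(2*k+1) * (K0 (m₁*x) * K0 (m₂*x) * K0 (m₃*x) * K0 (m₄*x)) := by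
  have hS : MeasurableSet (Ioi (0:ℝ) ×ˢ (Ioi (0:ℝ) ×ˢ Ioi (0:ℝ))) :=
    measurableSet_Ioi.prod (measurableSet_Ioi.prod measurableSet_Ioi)
  have hfm : Measurable (fun p : ℝ × ℝ × ℝ =>
      ((m₄^2 + m₁^2 * p.1 + m₂^2 * p.2.1 + m₃^2 * p.2.2)^(k+1) *
        (1 + 1/p.1 + 1/p.2.1 + 1/p.2.2)^(k+1))⁻¹ / (p.1 * p.2.1 * p.2.2)) := by fun_prop
  have hnn : 0 ≤ᵐ[volume.restrict (Ioi (0:ℝ) ×ˢ (Ioi (0:ℝ) ×ˢ Ioi (0:ℝ)))]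
      (fun p : ℝ × ℝ × ℝ =>
      ((m₄^2 + m₁^2 * p.1 + m₂^2 * p.2.1 + m₃^2 * p.2.2)^(k+1) *
        (1 + 1/p.1 + 1/p.2.1 + 1/p.2.2)^(k+1))⁻¹ / (p.1 * p.2.1 * p.2.2)) := by
    refine (ae_restrict_iff' hS).2 (Filter.Eventually.of_forall fun p hp => ?_)
    obtain ⟨hp1, hp2, hp3⟩ := hp
    have h1' : (0:ℝ) < p.1 := hp1
    have h2' : (0:ℝ) < p.2.1 := hp2
    have h3' : (0:ℝ) < p.2.2 := hp3
    positivity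
  have hgm : Measurable (fun x : ℝ =>
      (x/2)^(2*k+1) * (K0 (m₁*x) * K0 (m₂*x) * K0 (m₃*x) * K0 (m₄*x))) := by fun_prop
  have hgnn : 0 ≤ᵐ[volume.restrict (Ioi (0:ℝ))] (fun x : ℝ =>
      (x/2)^(2*k+1) * (K0 (m₁*x) * K0 (m₂*x) * K0 (m₃*x) * K0 (m₄*x))) := by
    refine (ae_restrict_iff' measurableSet_Ioi).2 (Filter.Eventually.of_forall fun x hx => ?_)
    have hx' : (0:ℝ) < x := hx
    have hprod : (0:ℝ) ≤ K0 (m₁*x) * K0 (m₂*x) * K0 (m₃*x) * K0 (m₄*x) :=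
      mul_nonneg (mul_nonneg (mul_nonneg (K0_nonneg _) (K0_nonneg _)) (K0_nonneg _))
        (K0_nonneg _)
    exact mul_nonneg (by positivity) hprod
  rw [integral_eq_lintegral_of_nonneg_ae hnn hfm.aestronglyMeasurable,
    integral_eq_lintegral_of_nonneg_ae hgnn hgm.aestronglyMeasurable,
    lint_triple _ (by fun_prop)]
  have cne : (((k.factorial : ℝ≥0∞))⁻¹ * ((k.factorial : ℝ≥0∞))⁻¹) ≠ ⊤ :=
    ENNReal.mul_ne_top (ENNReal.inv_ne_top.2 (Nat.cast_ne_zero.2 k.factorial_ne_zero))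
      (ENNReal.inv_ne_top.2 (Nat.cast_ne_zero.2 k.factorial_ne_zero))
  have hL : (∫⁻ x₁ in Ioi (0:ℝ), ∫⁻ x₂ in Ioi (0:ℝ), ∫⁻ x₃ in Ioi (0:ℝ),
      ENNReal.ofReal (((m₄^2 + m₁^2 * x₁ + m₂^2 * x₂ + m₃^2 * x₃)^(k+1) *
        (1 + 1/x₁ + 1/x₂ + 1/x₃)^(k+1))⁻¹ / (x₁ * x₂ * x₃)))
      = ((k.factorial : ℝ≥0∞))⁻¹ * ((k.factorial : ℝ≥0∞))⁻¹
        * (2^4 * ∫⁻ x in Ioi (0:ℝ), ENNReal.ofReal ((x/2)^(2*k+1)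
          * (K0 (m₁*x) * K0 (m₂*x) * K0 (m₃*x) * K0 (m₄*x)))) := by
    calc (∫⁻ x₁ in Ioi (0:ℝ), ∫⁻ x₂ in Ioi (0:ℝ), ∫⁻ x₃ in Ioi (0:ℝ),
        ENNReal.ofReal (((m₄^2 + m₁^2 * x₁ + m₂^2 * x₂ + m₃^2 * x₃)^(k+1) *
          (1 + 1/x₁ + 1/x₂ + 1/x₃)^(k+1))⁻¹ / (x₁ * x₂ * x₃)))
        = ∫⁻ x₁ in Ioi (0:ℝ), ∫⁻ x₂ in Ioi (0:ℝ), ∫⁻ x₃ in Ioi (0:ℝ),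
            (((k.factorial : ℝ≥0∞))⁻¹ * ((k.factorial : ℝ≥0∞))⁻¹
              * ∫⁻ t in Ioi (0:ℝ), ∫⁻ s in Ioi (0:ℝ), Wfun m₁ m₂ m₃ m₄ k x₁ x₂ x₃ t s) := by
          refine setLIntegral_congr_fun measurableSet_Ioi (fun x₁ hx₁ => ?_)
          refine setLIntegral_congr_fun measurableSet_Ioi (fun x₂ hx₂ => ?_)
          refine setLIntegral_congr_fun measurableSet_Ioi (fun x₃ hx₃ => ?_)
          exact step1 h₁ h₂ h₃ h₄ k hx₁ hx₂ hx₃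
      _ = ((k.factorial : ℝ≥0∞))⁻¹ * ((k.factorial : ℝ≥0∞))⁻¹
            * ∫⁻ x₁ in Ioi (0:ℝ), ∫⁻ x₂ in Ioi (0:ℝ), ∫⁻ x₃ in Ioi (0:ℝ),
              ∫⁻ t in Ioi (0:ℝ), ∫⁻ s in Ioi (0:ℝ), Wfun m₁ m₂ m₃ m₄ k x₁ x₂ x₃ t s := by
          rw [← lintegral_const_mul' _ _ cne]
          refine setLIntegral_congr_fun measurableSet_Ioi (fun x₁ _ => ?_)
          rw [← lintegral_const_mul' _ _ cne]
          refine setLIntegral_congr_fun measurableSet_Ioi (fun x₂ _ => ?_)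
          rw [← lintegral_const_mul' _ _ cne]
      _ = ((k.factorial : ℝ≥0∞))⁻¹ * ((k.factorial : ℝ≥0∞))⁻¹
            * ∫⁻ t in Ioi (0:ℝ), ∫⁻ s in Ioi (0:ℝ), ∫⁻ x₁ in Ioi (0:ℝ),
              ∫⁻ x₂ in Ioi (0:ℝ), ∫⁻ x₃ in Ioi (0:ℝ), Wfun m₁ m₂ m₃ m₄ k x₁ x₂ x₃ t s := by
          rw [swapchain]
      _ = ((k.factorial : ℝ≥0∞))⁻¹ * ((k.factorial : ℝ≥0∞))⁻¹
            * ∫⁻ t in Ioi (0:ℝ), ∫⁻ s in Ioi (0:ℝ), Phif m₁ m₂ m₃ m₄ k t s := by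
          congr 1
          refine setLIntegral_congr_fun measurableSet_Ioi (fun t ht => ?_)
          refine setLIntegral_congr_fun measurableSet_Ioi (fun s hs => ?_)
          exact step3 h₁ h₂ h₃ h₄ k ht hs
      _ = _ := by rw [step4 h₁ h₂ h₃ h₄ k]
  rw [hL]
  rw [ENNReal.toReal_mul, ENNReal.toReal_mul, ENNReal.toReal_mul, ENNReal.toReal_inv,
    ENNReal.toReal_natCast]
  have hfac : (k.factorial : ℝ) ≠ 0 := Nat.cast_ne_zero.2 k.factorial_ne_zero
  rw [show ((2:ℝ≥0∞)^4).toReal = (2:ℝ)^4 by simp]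
  rw [div_eq_mul_inv, pow_two, mul_inv]
  ring
end

section
/- Let m₁, m₂, m₃, m₄ > 0 and let t be a real number with 0 ≤ t < (m₁+m₂+m₃+m₄)². Then ∫_{(0,∞)³} [ (m₄² + m₁²x₁ + m₂²x₂ + m₃²x₃)(1 + 1/x₁ + 1/x₂ + 1/x₃) − t ]^{−1} dx₁dx₂dx₃/(x₁x₂x₃) = ∑_{k≥0} t^k · I_k, where I_k := ∫_{(0,∞)³} (m₄² + m₁²x₁ + m₂²x₂ + m₃²x₃)^{−(k+1)} (1 + 1/x₁ + 1/x₂ + 1/x₃)^{−(k+1)} dx₁dx₂dx₃/(x₁x₂x₃), and the series on the right converges. -/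
open MeasureTheory Set Real
open scoped ENNReal

noncomputable def hh (x : ℝ) : ℝ := min (x ^ (-(2:ℝ)/3)) (x ^ (-(4:ℝ)/3))

lemma hh_pos {x : ℝ} (hx : 0 < x) : 0 < hh x :=
  lt_min (Real.rpow_pos_of_pos hx _) (Real.rpow_pos_of_pos hx _)

noncomputable def PP (x : ℝ) : ℝ := (max 1 x) ^ ((1:ℝ)/3) * (max 1 x⁻¹) ^ ((1:ℝ)/3)

lemma hP {x : ℝ} (hx : 0 < x) : x * hh x * PP x = 1 := by
  rcases le_total 1 x with h | h
  · have h2 : x⁻¹ ≤ 1 := inv_le_one_of_one_le₀ h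
    have hhx : hh x = x ^ (-(4:ℝ)/3) :=
      min_eq_right (Real.rpow_le_rpow_of_exponent_le h (by norm_num))
    rw [PP, hhx, max_eq_right h, max_eq_left h2, Real.one_rpow, mul_one,
      mul_assoc, ← Real.rpow_add hx]
    norm_num
    rw [Real.rpow_neg_one]
    exact mul_inv_cancel₀ hx.ne'
  · have h2 : 1 ≤ x⁻¹ := one_le_inv₀ hx |>.2 h
    have hhx : hh x = x ^ (-(2:ℝ)/3) :=
      min_eq_left (Real.rpow_le_rpow_of_exponent_ge hx h (by norm_num))
    rw [PP, hhx, max_eq_left h, max_eq_right h2, Real.one_rpow, one_mul,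
      Real.inv_rpow hx.le, ← Real.rpow_neg hx.le, mul_assoc, ← Real.rpow_add hx]
    norm_num
    rw [Real.rpow_neg_one]
    exact mul_inv_cancel₀ hx.ne'

lemma pair2 {a b u v : ℝ} (hu : 0 < u) (hv : 0 < v) :
    2*(a*b) ≤ a^2*(u/v) + b^2*(v/u) := by
  have h0 : (a*u-b*v)^2/(u*v) = a^2*(u/v) - 2*(a*b) + b^2*(v/u) := by
    field_simp; ring
  have h1 : 0 ≤ (a*u-b*v)^2/(u*v) := div_nonneg (sq_nonneg _) (by positivity)
  linarith [h0 ▸ h1]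

lemma cs {m₁ m₂ m₃ m₄ x y z : ℝ} (hx : 0 < x) (hy : 0 < y) (hz : 0 < z) :
    (m₁+m₂+m₃+m₄)^2 ≤ (m₄^2+m₁^2*x+m₂^2*y+m₃^2*z)*(1+1/x+1/y+1/z) := by
  have expand : (m₄^2+m₁^2*x+m₂^2*y+m₃^2*z)*(1+1/x+1/y+1/z)
      = (m₁^2+m₂^2+m₃^2+m₄^2) + (m₁^2*(x/1) + m₄^2*(1/x)) + (m₂^2*(y/1) + m₄^2*(1/y))
        + (m₃^2*(z/1) + m₄^2*(1/z)) + (m₁^2*(x/y)+m₂^2*(y/x)) + (m₁^2*(x/z)+m₃^2*(z/x))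
        + (m₂^2*(y/z)+m₃^2*(z/y)) := by
    field_simp; ring
  have k1 := pair2 (a := m₁) (b := m₄) hx one_pos
  have k2 := pair2 (a := m₂) (b := m₄) hy one_pos
  have k3 := pair2 (a := m₃) (b := m₄) hz one_pos
  have k4 := pair2 (a := m₁) (b := m₂) hx hy
  have k5 := pair2 (a := m₁) (b := m₃) hx hz
  have k6 := pair2 (a := m₂) (b := m₃) hy hz
  rw [expand]; nlinarith [k1, k2, k3, k4, k5, k6]

lemma cube_root_le {a b c M : ℝ} (ha : 1 ≤ a) (hb : 1 ≤ b) (hc : 1 ≤ c)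
    (hA : a ≤ M) (hB : b ≤ M) (hC : c ≤ M) : (a*b*c) ^ ((1:ℝ)/3) ≤ M := by
  have hM : 0 < M := one_pos.trans_le (ha.trans hA)
  have hab : a*b ≤ M*M := mul_le_mul hA hB (by linarith) hM.le
  have h1 : a*b*c ≤ M^(3:ℕ) := by
    have : a*b*c ≤ M*M*M := mul_le_mul hab hC (by linarith) (by positivity)
    nlinarith
  calc (a*b*c) ^ ((1:ℝ)/3) ≤ (M^(3:ℕ)) ^ ((1:ℝ)/3) :=
        Real.rpow_le_rpow (by positivity) h1 (by norm_num)
    _ = M := by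
        rw [← Real.rpow_natCast M 3, ← Real.rpow_mul hM.le]; norm_num

set_option maxHeartbeats 1000000 in
lemma ST_lb {m₁ m₂ m₃ m₄ x y z : ℝ} (h₁ : 0 < m₁) (h₂ : 0 < m₂) (h₃ : 0 < m₃) (h₄ : 0 < m₄)
    (hx : 0 < x) (hy : 0 < y) (hz : 0 < z) :
    min (min (m₁^2) (m₂^2)) (min (m₃^2) (m₄^2)) * (PP x * PP y * PP z)
      ≤ (m₄^2+m₁^2*x+m₂^2*y+m₃^2*z)*(1+1/x+1/y+1/z) := by
  set c₁ := min (min (m₁^2) (m₂^2)) (min (m₃^2) (m₄^2)) with hc₁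
  have hc₁pos : 0 < c₁ := lt_min (lt_min (pow_pos h₁ 2) (pow_pos h₂ 2))
    (lt_min (pow_pos h₃ 2) (pow_pos h₄ 2))
  set S := m₄^2+m₁^2*x+m₂^2*y+m₃^2*z with hS
  set T := 1+1/x+1/y+1/z with hT
  set M := max (max 1 x) (max (max 1 y) (max 1 z)) with hM
  set N := max (max 1 x⁻¹) (max (max 1 y⁻¹) (max 1 z⁻¹)) with hN
  have hMpos : (1:ℝ) ≤ M := le_trans (le_max_left _ _) (le_max_left _ _)
  have hNpos : (1:ℝ) ≤ N := le_trans (le_max_left _ _) (le_max_left _ _)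
  -- c₁ * M ≤ S
  have hSM : c₁ * M ≤ S := by
    have e1 : c₁ ≤ m₄^2 := le_trans (min_le_right _ _) (min_le_right _ _)
    have e2 : c₁ ≤ m₁^2 := le_trans (min_le_left _ _) (min_le_left _ _)
    have e3 : c₁ ≤ m₂^2 := le_trans (min_le_left _ _) (min_le_right _ _)
    have e4 : c₁ ≤ m₃^2 := le_trans (min_le_right _ _) (min_le_left _ _)
    have hMle : M ≤ max (max 1 x) (max y z) := by
      apply max_le (le_max_left _ _)
      apply max_le
      · exact max_le (le_trans (le_max_left 1 x) (le_max_left _ _)) (le_trans (le_max_left _ _) (le_max_right _ _))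
      · exact max_le (le_trans (le_max_left 1 x) (le_max_left _ _)) (le_trans (le_max_right _ _) (le_max_right _ _))
    have : c₁ * M ≤ c₁ * max (max 1 x) (max y z) := by
      exact mul_le_mul_of_nonneg_left hMle hc₁pos.le
    refine this.trans ?_
    rcases max_cases (max 1 x) (max y z) with ⟨h, _⟩ | ⟨h, _⟩ <;> rw [h]
    · rcases max_cases (1:ℝ) x with ⟨h', _⟩ | ⟨h', _⟩ <;> rw [h'] <;> nlinarith
    · rcases max_cases y z with ⟨h', _⟩ | ⟨h', _⟩ <;> rw [h'] <;> nlinarith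
  -- N ≤ T
  have hNT : N ≤ T := by
    have i1 : (1:ℝ) ≤ T := by
      have : 0 < 1/x + 1/y + 1/z := by positivity
      simp only [hT]; linarith
    have i2 : x⁻¹ ≤ T := by
      have : 0 < 1 + 1/y + 1/z := by positivity
      simp only [hT, ← one_div]; linarith
    have i3 : y⁻¹ ≤ T := by
      have : 0 < 1 + 1/x + 1/z := by positivity
      simp only [hT, ← one_div]; linarith
    have i4 : z⁻¹ ≤ T := by
      have : 0 < 1 + 1/x + 1/y := by positivity
      simp only [hT, ← one_div]; linarith
    exact max_le (max_le i1 i2) (max_le (max_le i1 i3) (max_le i1 i4))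
  -- products
  have hMprod : (max 1 x * max 1 y * max 1 z) ^ ((1:ℝ)/3) ≤ M :=
    cube_root_le (le_max_left _ _) (le_max_left _ _) (le_max_left _ _)
      (le_max_left _ _) (le_trans (le_max_left _ _) (le_max_right _ _))
      (le_trans (le_max_right _ _) (le_max_right _ _))
  have hNprod : (max 1 x⁻¹ * max 1 y⁻¹ * max 1 z⁻¹) ^ ((1:ℝ)/3) ≤ N :=
    cube_root_le (le_max_left _ _) (le_max_left _ _) (le_max_left _ _)
      (le_max_left _ _) (le_trans (le_max_left _ _) (le_max_right _ _))
      (le_trans (le_max_right _ _) (le_max_right _ _))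
  have split : PP x * PP y * PP z
      = (max 1 x * max 1 y * max 1 z) ^ ((1:ℝ)/3) * (max 1 x⁻¹ * max 1 y⁻¹ * max 1 z⁻¹) ^ ((1:ℝ)/3) := by
    simp only [PP]
    rw [Real.mul_rpow (by positivity) (by positivity), Real.mul_rpow (by positivity) (by positivity),
      Real.mul_rpow (by positivity) (by positivity), Real.mul_rpow (by positivity) (by positivity)]
    ring
  rw [split]
  calc c₁ * ((max 1 x * max 1 y * max 1 z) ^ ((1:ℝ)/3) * (max 1 x⁻¹ * max 1 y⁻¹ * max 1 z⁻¹) ^ ((1:ℝ)/3))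
      ≤ c₁ * (M * N) := by
        apply mul_le_mul_of_nonneg_left _ hc₁pos.le
        exact mul_le_mul hMprod hNprod (by positivity) (by linarith)
    _ = (c₁ * M) * N := by ring
    _ ≤ S * T := mul_le_mul hSM hNT (by linarith) (by nlinarith [hSM, hMpos, hc₁pos])


lemma lint_of_integrableOn {f : ℝ → ℝ} {s : Set ℝ} (hf : IntegrableOn f s) :
    ∫⁻ x in s, ENNReal.ofReal (f x) < ⊤ := by
  have h1 : ∀ x, ENNReal.ofReal (f x) ≤ ‖f x‖₊ := by
    intro x
    rw [← enorm_eq_nnnorm, Real.enorm_eq_ofReal_abs]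
    exact ENNReal.ofReal_le_ofReal (le_abs_self _)
  calc ∫⁻ x in s, ENNReal.ofReal (f x) ≤ ∫⁻ x in s, ‖f x‖₊ := lintegral_mono h1
  _ < ⊤ := hf.2

lemma lint_hh : ∫⁻ x in Set.Ioi (0:ℝ), ENNReal.ofReal (hh x) < ⊤ := by
  have hsplit : Set.Ioi (0:ℝ) = Set.Ioo 0 1 ∪ Set.Ici 1 := (Set.Ioo_union_Ici_eq_Ioi zero_lt_one).symm
  rw [hsplit, lintegral_union measurableSet_Ici (((Set.Iio_disjoint_Ici le_rfl).mono_left Set.Ioo_subset_Iio_self))]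
  have hmeas2 : Measurable fun x : ℝ => ENNReal.ofReal (x ^ (-(2:ℝ)/3)) := by fun_prop
  have hmeas4 : Measurable fun x : ℝ => ENNReal.ofReal (x ^ (-(4:ℝ)/3)) := by fun_prop
  have b1 : ∫⁻ x in Set.Ioo (0:ℝ) 1, ENNReal.ofReal (hh x) < ⊤ := by
    calc ∫⁻ x in Set.Ioo (0:ℝ) 1, ENNReal.ofReal (hh x)
        ≤ ∫⁻ x in Set.Ioo (0:ℝ) 1, ENNReal.ofReal (x ^ (-(2:ℝ)/3)) :=
          setLIntegral_mono hmeas2 (fun x _ => ENNReal.ofReal_le_ofReal (min_le_left _ _))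
      _ < ⊤ := lint_of_integrableOn ((intervalIntegral.integrableOn_Ioo_rpow_iff zero_lt_one).2 (by norm_num))
  have b2 : ∫⁻ x in Set.Ici (1:ℝ), ENNReal.ofReal (hh x) < ⊤ := by
    rw [← setLIntegral_congr MeasureTheory.Ioi_ae_eq_Ici]
    calc ∫⁻ x in Set.Ioi (1:ℝ), ENNReal.ofReal (hh x)
        ≤ ∫⁻ x in Set.Ioi (1:ℝ), ENNReal.ofReal (x ^ (-(4:ℝ)/3)) :=
          setLIntegral_mono hmeas4 (fun x _ => ENNReal.ofReal_le_ofReal (min_le_right _ _))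
      _ < ⊤ := lint_of_integrableOn (integrableOn_Ioi_rpow_of_lt (by norm_num) zero_lt_one)
  exact ENNReal.add_lt_top.2 ⟨b1, b2⟩


lemma series_pt {A t : ℝ} (hA : 0 < A) (htA : t < A) (ht0 : 0 ≤ t) :
    Summable (fun k : ℕ => t^k * (A^(k+1))⁻¹) ∧
      (∑' k : ℕ, t^k * (A^(k+1))⁻¹) = (A - t)⁻¹ := by
  have hr : t/A < 1 := (div_lt_one hA).2 htA
  have hr0 : 0 ≤ t/A := div_nonneg ht0 hA.le
  have heq : ∀ k : ℕ, (t/A)^k * A⁻¹ = t^k * (A^(k+1))⁻¹ := by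
    intro k
    rw [div_pow, pow_succ, mul_inv, div_eq_mul_inv]
    ring
  constructor
  · exact ((summable_geometric_of_lt_one hr0 hr).mul_right A⁻¹).congr heq
  · rw [← tsum_congr heq, tsum_mul_right, tsum_geometric_of_lt_one hr0 hr, ← mul_inv]
    congr 1
    field_simp

noncomputable def KK (m₁ m₂ m₃ m₄ t : ℝ) : ℝ :=
  ((1 - t/(m₁+m₂+m₃+m₄)^2) * (min (min (m₁^2) (m₂^2)) (min (m₃^2) (m₄^2))))⁻¹

lemma g_bound {m₁ m₂ m₃ m₄ t x y z : ℝ} (h₁ : 0 < m₁) (h₂ : 0 < m₂) (h₃ : 0 < m₃)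
    (h₄ : 0 < m₄) (ht0 : 0 ≤ t) (ht : t < (m₁+m₂+m₃+m₄)^2)
    (hx : 0 < x) (hy : 0 < y) (hz : 0 < z) :
    ((m₄^2+m₁^2*x+m₂^2*y+m₃^2*z)*(1+1/x+1/y+1/z) - t)⁻¹ / (x*y*z)
      ≤ KK m₁ m₂ m₃ m₄ t * (hh x * (hh y * hh z)) := by
  have hc : 0 < (m₁+m₂+m₃+m₄)^2 := pow_pos (by linarith) 2
  set c := (m₁+m₂+m₃+m₄)^2 with hcdef
  set c₁ := min (min (m₁^2) (m₂^2)) (min (m₃^2) (m₄^2)) with hc₁def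
  have hc₁pos : 0 < c₁ := lt_min (lt_min (pow_pos h₁ 2) (pow_pos h₂ 2))
    (lt_min (pow_pos h₃ 2) (pow_pos h₄ 2))
  set A := (m₄^2+m₁^2*x+m₂^2*y+m₃^2*z)*(1+1/x+1/y+1/z) with hAdef
  have hApos : 0 < A := by
    apply mul_pos
    · nlinarith [mul_pos (pow_pos h₁ 2) hx, mul_pos (pow_pos h₂ 2) hy,
        mul_pos (pow_pos h₃ 2) hz, pow_pos h₄ 2]
    · have i1 : 0 < 1/x := by positivity
      have i2 : 0 < 1/y := by positivity
      have i3 : 0 < 1/z := by positivity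
      linarith
  have hAc : c ≤ A := cs hx hy hz
  have hδ : 0 < 1 - t/c := by
    rw [sub_pos, div_lt_one hc]; exact ht
  have hAt : (1 - t/c) * A ≤ A - t := by
    have h' : t/c * c ≤ t/c * A := mul_le_mul_of_nonneg_left hAc (div_nonneg ht0 hc.le)
    rw [div_mul_cancel₀ _ hc.ne'] at h'
    nlinarith
  have hhx := hh_pos hx
  have hhy := hh_pos hy
  have hhz := hh_pos hz
  have hxPP : x * PP x = (hh x)⁻¹ := by
    have h1 : (x * PP x) * hh x = 1 := by rw [← hP hx]; ring
    exact eq_inv_of_mul_eq_one_left h1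
  have hyPP : y * PP y = (hh y)⁻¹ := by
    have h1 : (y * PP y) * hh y = 1 := by rw [← hP hy]; ring
    exact eq_inv_of_mul_eq_one_left h1
  have hzPP : z * PP z = (hh z)⁻¹ := by
    have h1 : (z * PP z) * hh z = 1 := by rw [← hP hz]; ring
    exact eq_inv_of_mul_eq_one_left h1
  have hST := ST_lb h₁ h₂ h₃ h₄ hx hy hz
  have hAxyz : c₁ * (hh x * (hh y * hh z))⁻¹ ≤ A * (x*y*z) := by
    have step := mul_le_mul_of_nonneg_right hST (by positivity : (0:ℝ) ≤ x*y*z)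
    calc c₁ * (hh x * (hh y * hh z))⁻¹
        = c₁ * ((x * PP x) * ((y * PP y) * (z * PP z))) := by
          rw [hxPP, hyPP, hzPP, mul_inv, mul_inv]
      _ = (c₁ * (PP x * PP y * PP z)) * (x*y*z) := by ring
      _ ≤ A * (x*y*z) := step
  have hhprodpos : 0 < hh x * (hh y * hh z) := by positivity
  have hden : 0 < (1 - t/c) * (c₁ * (hh x * (hh y * hh z))⁻¹) :=
    mul_pos hδ (mul_pos hc₁pos (inv_pos.2 hhprodpos))
  calc (A - t)⁻¹ / (x*y*z) = ((A - t) * (x*y*z))⁻¹ := by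
        rw [div_eq_mul_inv, ← mul_inv]
    _ ≤ ((1 - t/c) * (c₁ * (hh x * (hh y * hh z))⁻¹))⁻¹ := by
        apply inv_anti₀ hden
        calc (1 - t/c) * (c₁ * (hh x * (hh y * hh z))⁻¹)
            ≤ (1 - t/c) * (A * (x*y*z)) := mul_le_mul_of_nonneg_left hAxyz hδ.le
          _ = ((1 - t/c) * A) * (x*y*z) := by ring
          _ ≤ (A - t) * (x*y*z) := mul_le_mul_of_nonneg_right hAt (by positivity)
    _ = KK m₁ m₂ m₃ m₄ t * (hh x * (hh y * hh z)) := by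
        have e : ((1 - t/c) * (c₁ * (hh x * (hh y * hh z))⁻¹))⁻¹
            = ((1 - t/c) * c₁)⁻¹ * (hh x * (hh y * hh z)) := by
          rw [mul_inv, mul_inv, inv_inv, ← mul_assoc, ← mul_inv]
        rw [e, KK, ← hcdef, ← hc₁def]

noncomputable def Hh (x : ℝ) : ℝ≥0∞ := ENNReal.ofReal (hh x)

lemma Hh_meas : Measurable Hh := by
  unfold Hh hh; fun_prop

/-- The coefficient integral `I_k` of the series expansion of the three-banana
integral with general masses. -/
noncomputable def Ik (m₁ m₂ m₃ m₄ : ℝ) (k : ℕ) : ℝ :=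
  ∫ p in Set.Ioi (0:ℝ) ×ˢ (Set.Ioi (0:ℝ) ×ˢ Set.Ioi (0:ℝ)),
    ((m₄^2 + m₁^2 * p.1 + m₂^2 * p.2.1 + m₃^2 * p.2.2)^(k+1) *
      (1 + 1/p.1 + 1/p.2.1 + 1/p.2.2)^(k+1))⁻¹ / (p.1 * p.2.1 * p.2.2)

noncomputable def fkf (m₁ m₂ m₃ m₄ t : ℝ) (k : ℕ) (p : ℝ×ℝ×ℝ) : ℝ :=
  t^k * (((m₄^2 + m₁^2 * p.1 + m₂^2 * p.2.1 + m₃^2 * p.2.2)^(k+1) *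
      (1 + 1/p.1 + 1/p.2.1 + 1/p.2.2)^(k+1))⁻¹ / (p.1 * p.2.1 * p.2.2))

theorem stmt2 (m₁ m₂ m₃ m₄ t : ℝ) (h₁ : 0 < m₁) (h₂ : 0 < m₂) (h₃ : 0 < m₃) (h₄ : 0 < m₄)
    (ht0 : 0 ≤ t) (ht : t < (m₁ + m₂ + m₃ + m₄)^2) :
    Summable (fun k : ℕ => t^k * Ik m₁ m₂ m₃ m₄ k) ∧
    (∫ p in Set.Ioi (0:ℝ) ×ˢ (Set.Ioi (0:ℝ) ×ˢ Set.Ioi (0:ℝ)),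
      ((m₄^2 + m₁^2 * p.1 + m₂^2 * p.2.1 + m₃^2 * p.2.2) *
        (1 + 1/p.1 + 1/p.2.1 + 1/p.2.2) - t)⁻¹ / (p.1 * p.2.1 * p.2.2)) =
    ∑' k : ℕ, t^k * Ik m₁ m₂ m₃ m₄ k := by
  have hc : 0 < (m₁+m₂+m₃+m₄)^2 := pow_pos (by linarith) 2
  set Q : Set (ℝ×ℝ×ℝ) := Set.Ioi (0:ℝ) ×ˢ (Set.Ioi (0:ℝ) ×ˢ Set.Ioi (0:ℝ)) with hQdef
  have hQm : MeasurableSet Q :=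
    measurableSet_Ioi.prod (measurableSet_Ioi.prod measurableSet_Ioi)
  have hfkm : ∀ k, Measurable (fkf m₁ m₂ m₃ m₄ t k) := by
    intro k; unfold fkf; fun_prop
  have hGm : Measurable (fun p : ℝ×ℝ×ℝ =>
      ((m₄^2 + m₁^2 * p.1 + m₂^2 * p.2.1 + m₃^2 * p.2.2) *
        (1 + 1/p.1 + 1/p.2.1 + 1/p.2.2) - t)⁻¹ / (p.1 * p.2.1 * p.2.2)) := by fun_prop
  have hmem : ∀ p : ℝ×ℝ×ℝ, p ∈ Q → 0 < p.1 ∧ 0 < p.2.1 ∧ 0 < p.2.2 :=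
    fun p hp => ⟨hp.1, hp.2.1, hp.2.2⟩
  have hSpos : ∀ p ∈ Q, 0 < (m₄^2 + m₁^2 * p.1 + m₂^2 * p.2.1 + m₃^2 * p.2.2) := by
    intro p hp; obtain ⟨hx, hy, hz⟩ := hmem p hp
    nlinarith [mul_pos (pow_pos h₁ 2) hx, mul_pos (pow_pos h₂ 2) hy,
      mul_pos (pow_pos h₃ 2) hz, pow_pos h₄ 2]
  have hTpos : ∀ p ∈ Q, 0 < (1 + 1/p.1 + 1/p.2.1 + 1/p.2.2) := by
    intro p hp; obtain ⟨hx, hy, hz⟩ := hmem p hp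
    have i1 : 0 < 1/p.1 := by positivity
    have i2 : 0 < 1/p.2.1 := by positivity
    have i3 : 0 < 1/p.2.2 := by positivity
    linarith
  have hfk_nonneg : ∀ (k : ℕ), ∀ p ∈ Q, 0 ≤ fkf m₁ m₂ m₃ m₄ t k p := by
    intro k p hp; obtain ⟨hx, hy, hz⟩ := hmem p hp
    have hS := hSpos p hp; have hT := hTpos p hp
    unfold fkf
    have hprod : 0 < (m₄^2 + m₁^2 * p.1 + m₂^2 * p.2.1 + m₃^2 * p.2.2)^(k+1) *
        (1 + 1/p.1 + 1/p.2.1 + 1/p.2.2)^(k+1) := mul_pos (pow_pos hS _) (pow_pos hT _)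
    exact mul_nonneg (pow_nonneg ht0 k)
      (div_nonneg (inv_nonneg.2 hprod.le) (mul_pos (mul_pos hx hy) hz).le)
  have hpt : ∀ p ∈ Q, Summable (fun k : ℕ => fkf m₁ m₂ m₃ m₄ t k p) ∧
      (∑' k : ℕ, fkf m₁ m₂ m₃ m₄ t k p) =
        ((m₄^2 + m₁^2 * p.1 + m₂^2 * p.2.1 + m₃^2 * p.2.2) *
          (1 + 1/p.1 + 1/p.2.1 + 1/p.2.2) - t)⁻¹ / (p.1 * p.2.1 * p.2.2) := by
    intro p hp
    obtain ⟨hx, hy, hz⟩ := hmem p hp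
    have hS := hSpos p hp; have hT := hTpos p hp
    have hA : 0 < (m₄^2 + m₁^2 * p.1 + m₂^2 * p.2.1 + m₃^2 * p.2.2) *
        (1 + 1/p.1 + 1/p.2.1 + 1/p.2.2) := mul_pos hS hT
    have hcA := cs (m₁ := m₁) (m₂ := m₂) (m₃ := m₃) (m₄ := m₄) hx hy hz
    have htA : t < (m₄^2 + m₁^2 * p.1 + m₂^2 * p.2.1 + m₃^2 * p.2.2) *
        (1 + 1/p.1 + 1/p.2.1 + 1/p.2.2) := lt_of_lt_of_le ht hcA
    obtain ⟨hsum, htsum⟩ := series_pt hA htA ht0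
    have heq : ∀ k : ℕ, t^k * ((((m₄^2 + m₁^2 * p.1 + m₂^2 * p.2.1 + m₃^2 * p.2.2) *
        (1 + 1/p.1 + 1/p.2.1 + 1/p.2.2))^(k+1))⁻¹) * (p.1 * p.2.1 * p.2.2)⁻¹
        = fkf m₁ m₂ m₃ m₄ t k p := by
      intro k; unfold fkf
      rw [mul_pow]; ring
    constructor
    · exact (hsum.mul_right _).congr heq
    · rw [← tsum_congr heq, tsum_mul_right, htsum]; ring
  have hFm : ∀ k : ℕ, Measurable (fun p => ENNReal.ofReal (fkf m₁ m₂ m₃ m₄ t k p)) :=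
    fun k => (hfkm k).ennreal_ofReal
  have key : (∫⁻ p in Q, ENNReal.ofReal
      (((m₄^2 + m₁^2 * p.1 + m₂^2 * p.2.1 + m₃^2 * p.2.2) *
        (1 + 1/p.1 + 1/p.2.1 + 1/p.2.2) - t)⁻¹ / (p.1 * p.2.1 * p.2.2)))
      = ∑' k : ℕ, ∫⁻ p in Q, ENNReal.ofReal (fkf m₁ m₂ m₃ m₄ t k p) := by
    rw [← lintegral_tsum (fun k => (hFm k).aemeasurable)]
    apply setLIntegral_congr_fun hQm
    intro p hp
    obtain ⟨hsum, htsum⟩ := hpt p hp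
    dsimp only
    rw [← htsum, ENNReal.ofReal_tsum_of_nonneg (fun k => hfk_nonneg k p hp) hsum]
  -- finiteness
  have hKpos : 0 < (1 - t/(m₁+m₂+m₃+m₄)^2) *
      (min (min (m₁^2) (m₂^2)) (min (m₃^2) (m₄^2))) :=
    mul_pos (by rw [sub_pos, div_lt_one hc]; exact ht)
      (lt_min (lt_min (pow_pos h₁ 2) (pow_pos h₂ 2)) (lt_min (pow_pos h₃ 2) (pow_pos h₄ 2)))
  have hKnn : 0 ≤ KK m₁ m₂ m₃ m₄ t := inv_nonneg.2 hKpos.le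
  have hb : ∀ p ∈ Q, ENNReal.ofReal
      (((m₄^2 + m₁^2 * p.1 + m₂^2 * p.2.1 + m₃^2 * p.2.2) *
        (1 + 1/p.1 + 1/p.2.1 + 1/p.2.2) - t)⁻¹ / (p.1 * p.2.1 * p.2.2))
      ≤ ENNReal.ofReal (KK m₁ m₂ m₃ m₄ t) * (Hh p.1 * (Hh p.2.1 * Hh p.2.2)) := by
    intro p hp; obtain ⟨hx, hy, hz⟩ := hmem p hp
    have hgb := g_bound h₁ h₂ h₃ h₄ ht0 ht hx hy hz
    calc ENNReal.ofReal (((m₄^2 + m₁^2 * p.1 + m₂^2 * p.2.1 + m₃^2 * p.2.2) *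
          (1 + 1/p.1 + 1/p.2.1 + 1/p.2.2) - t)⁻¹ / (p.1 * p.2.1 * p.2.2))
        ≤ ENNReal.ofReal (KK m₁ m₂ m₃ m₄ t * (hh p.1 * (hh p.2.1 * hh p.2.2))) :=
          ENNReal.ofReal_le_ofReal hgb
      _ = ENNReal.ofReal (KK m₁ m₂ m₃ m₄ t) * (Hh p.1 * (Hh p.2.1 * Hh p.2.2)) := by
          unfold Hh
          rw [ENNReal.ofReal_mul hKnn, ENNReal.ofReal_mul (hh_pos hx).le,
            ENNReal.ofReal_mul (hh_pos hy).le]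
  have hμ : (volume : Measure (ℝ×ℝ×ℝ)).restrict Q
      = (volume.restrict (Set.Ioi 0)).prod
        ((volume.restrict (Set.Ioi 0)).prod (volume.restrict (Set.Ioi 0))) := by
    rw [hQdef, Measure.prod_restrict, Measure.prod_restrict]
    rfl
  have e2 : (∫⁻ (q : ℝ×ℝ), Hh q.1 * Hh q.2
      ∂((volume.restrict (Set.Ioi 0)).prod (volume.restrict (Set.Ioi 0))))
      = (∫⁻ x in Set.Ioi (0:ℝ), Hh x) * (∫⁻ x in Set.Ioi (0:ℝ), Hh x) :=
    lintegral_prod_mul Hh_meas.aemeasurable Hh_meas.aemeasurable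
  have e1 : (∫⁻ p in Q, Hh p.1 * (Hh p.2.1 * Hh p.2.2))
      = (∫⁻ x in Set.Ioi (0:ℝ), Hh x) *
        ((∫⁻ x in Set.Ioi (0:ℝ), Hh x) * (∫⁻ x in Set.Ioi (0:ℝ), Hh x)) := by
    rw [hμ]
    exact (lintegral_prod_mul (f := Hh) (g := fun q : ℝ×ℝ => Hh q.1 * Hh q.2)
      Hh_meas.aemeasurable ((Hh_meas.comp measurable_fst).mul (Hh_meas.comp measurable_snd)).aemeasurable).trans (by rw [e2])
  have hJ : (∫⁻ x in Set.Ioi (0:ℝ), Hh x) < ⊤ := lint_hh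
  have fin : (∫⁻ p in Q, ENNReal.ofReal
      (((m₄^2 + m₁^2 * p.1 + m₂^2 * p.2.1 + m₃^2 * p.2.2) *
        (1 + 1/p.1 + 1/p.2.1 + 1/p.2.2) - t)⁻¹ / (p.1 * p.2.1 * p.2.2))) < ⊤ := by
    calc (∫⁻ p in Q, ENNReal.ofReal
        (((m₄^2 + m₁^2 * p.1 + m₂^2 * p.2.1 + m₃^2 * p.2.2) *
          (1 + 1/p.1 + 1/p.2.1 + 1/p.2.2) - t)⁻¹ / (p.1 * p.2.1 * p.2.2)))
        ≤ ∫⁻ p in Q, ENNReal.ofReal (KK m₁ m₂ m₃ m₄ t) * (Hh p.1 * (Hh p.2.1 * Hh p.2.2)) :=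
          setLIntegral_mono (measurable_const.mul ((Hh_meas.comp measurable_fst).mul
            ((Hh_meas.comp (measurable_fst.comp measurable_snd)).mul
              (Hh_meas.comp (measurable_snd.comp measurable_snd))))) hb
      _ = ENNReal.ofReal (KK m₁ m₂ m₃ m₄ t) * ∫⁻ p in Q, (Hh p.1 * (Hh p.2.1 * Hh p.2.2)) :=
          lintegral_const_mul' _ _ ENNReal.ofReal_ne_top
      _ < ⊤ := by
          rw [e1]
          exact ENNReal.mul_lt_top ENNReal.ofReal_lt_top
            (ENNReal.mul_lt_top hJ (ENNReal.mul_lt_top hJ hJ))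
  have hsumfin : (∑' k : ℕ, ∫⁻ p in Q, ENNReal.ofReal (fkf m₁ m₂ m₃ m₄ t k p)) ≠ ⊤ :=
    key ▸ fin.ne
  have hFfin : ∀ k : ℕ, (∫⁻ p in Q, ENNReal.ofReal (fkf m₁ m₂ m₃ m₄ t k p)) ≠ ⊤ :=
    fun k => (ENNReal.lt_top_of_tsum_ne_top hsumfin k).ne
  have hIk : ∀ k : ℕ, t^k * Ik m₁ m₂ m₃ m₄ k
      = (∫⁻ p in Q, ENNReal.ofReal (fkf m₁ m₂ m₃ m₄ t k p)).toReal := by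
    intro k
    have h1 : t^k * Ik m₁ m₂ m₃ m₄ k = ∫ p in Q, fkf m₁ m₂ m₃ m₄ t k p :=
      (integral_const_mul _ _).symm
    have h2 : (∫ p in Q, fkf m₁ m₂ m₃ m₄ t k p)
        = (∫⁻ p in Q, ENNReal.ofReal (fkf m₁ m₂ m₃ m₄ t k p)).toReal :=
      integral_eq_lintegral_of_nonneg_ae
        ((ae_restrict_iff' hQm).2 (Filter.Eventually.of_forall (fun p hp => hfk_nonneg k p hp)))
        (hfkm k).aestronglyMeasurable
    exact h1.trans h2
  refine ⟨(ENNReal.summable_toReal hsumfin).congr (fun k => (hIk k).symm), ?_⟩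
  have hg0 : 0 ≤ᵐ[volume.restrict Q] (fun p : ℝ×ℝ×ℝ =>
      ((m₄^2 + m₁^2 * p.1 + m₂^2 * p.2.1 + m₃^2 * p.2.2) *
        (1 + 1/p.1 + 1/p.2.1 + 1/p.2.2) - t)⁻¹ / (p.1 * p.2.1 * p.2.2)) := by
    apply (ae_restrict_iff' hQm).2
    apply Filter.Eventually.of_forall
    intro p hp
    obtain ⟨hx, hy, hz⟩ := hmem p hp
    have hcA := cs (m₁ := m₁) (m₂ := m₂) (m₃ := m₃) (m₄ := m₄) hx hy hz
    have : (0:ℝ) < (m₄^2 + m₁^2 * p.1 + m₂^2 * p.2.1 + m₃^2 * p.2.2) *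
        (1 + 1/p.1 + 1/p.2.1 + 1/p.2.2) - t := by linarith
    exact div_nonneg (inv_nonneg.2 this.le) (mul_pos (mul_pos hx hy) hz).le
  calc (∫ p in Q, ((m₄^2 + m₁^2 * p.1 + m₂^2 * p.2.1 + m₃^2 * p.2.2) *
        (1 + 1/p.1 + 1/p.2.1 + 1/p.2.2) - t)⁻¹ / (p.1 * p.2.1 * p.2.2))
      = (∫⁻ p in Q, ENNReal.ofReal
        (((m₄^2 + m₁^2 * p.1 + m₂^2 * p.2.1 + m₃^2 * p.2.2) *
          (1 + 1/p.1 + 1/p.2.1 + 1/p.2.2) - t)⁻¹ / (p.1 * p.2.1 * p.2.2))).toReal :=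
        integral_eq_lintegral_of_nonneg_ae hg0 hGm.aestronglyMeasurable
    _ = (∑' k : ℕ, ∫⁻ p in Q, ENNReal.ofReal (fkf m₁ m₂ m₃ m₄ t k p)).toReal := by rw [key]
    _ = ∑' k : ℕ, (∫⁻ p in Q, ENNReal.ofReal (fkf m₁ m₂ m₃ m₄ t k p)).toReal :=
        ENNReal.tsum_toReal_eq hFfin
    _ = ∑' k : ℕ, t^k * Ik m₁ m₂ m₃ m₄ k := tsum_congr fun k => (hIk k).symm
end

section
/- For each integer k ≥ 0 let I_k := (2⁴/(k!)²) ∫₀^∞ (x/2)^{2k+1} K₀(x)⁴ dx. Then for every integer k ≥ 0 the recursion (k+1)³·I_k − 2(2k+3)(5k²+15k+12)·I_{k+1} + 64(k+2)³·I_{k+2} = 0 holds; equivalently, with α_k = (k+1)³, β_k = −2(2k+1)(5k²+5k+2), γ_k = 64k³, one has α_k I_k + β_{k+1} I_{k+1} + γ_{k+2} I_{k+2} = 0. -/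
open MeasureTheory Set Filter Real
open scoped Topology

/-- The Bessel moment `I_k = (2⁴/(k!)²) ∫₀^∞ (x/2)^{2k+1} K₀(x)⁴ dx`. -/
noncomputable def besselMoment (k : ℕ) : ℝ :=
  (2^4 / ((Nat.factorial k : ℝ))^2) * ∫ x in Set.Ioi (0:ℝ), (x/2)^(2*k+1) * (K0 x)^4

namespace BesselAux

/-- The kernel `exp (-(a*(u+1/u)))`. -/
noncomputable def Ker (a u : ℝ) : ℝ := Real.exp (-a * (u + 1/u))

lemma Ker_pos (a u : ℝ) : 0 < Ker a u := Real.exp_pos _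

lemma Ker_eq (a u : ℝ) (hu : u ≠ 0) :
    Ker a u = Real.exp (-(a*u)) * Real.exp (-(a*(1/u))) := by
  rw [Ker, ← Real.exp_add]; ring_nf

lemma Ker_le_exp_mul {a u : ℝ} (ha : 0 ≤ a) (hu : 0 < u) :
    Ker a u ≤ Real.exp (-(a*u)) := by
  rw [Ker_eq a u hu.ne']
  nth_rewrite 2 [← mul_one (Real.exp (-(a*u)))]
  gcongr
  exact Real.exp_le_one_iff.2 (by rw [neg_nonpos]; positivity)

lemma Ker_le_exp_div {a u : ℝ} (ha : 0 ≤ a) (hu : 0 < u) :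
    Ker a u ≤ Real.exp (-(a*(1/u))) := by
  rw [Ker_eq a u hu.ne']
  nth_rewrite 2 [← one_mul (Real.exp (-(a*(1/u))))]
  gcongr
  exact Real.exp_le_one_iff.2 (by rw [neg_nonpos]; positivity)

lemma two_le_phi {u : ℝ} (hu : 0 < u) : 2 ≤ u + 1/u := by
  have h : u + 1/u - 2 = (u-1)^2/u := by field_simp; ring
  have h2 : 0 ≤ (u-1)^2/u := by positivity
  linarith

lemma phi_pos {u : ℝ} (hu : 0 < u) : 0 < u + 1/u := lt_of_lt_of_le (by norm_num) (two_le_phi hu)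

/-- Peeling off exponential decay: `Ker a u ≤ exp(-(a/2)·2) * Ker (a/2) u`. -/
lemma Ker_peel {a u : ℝ} (ha : 0 ≤ a) (hu : 0 < u) :
    Ker a u ≤ Real.exp (-a) * Ker (a/2) u := by
  rw [Ker, Ker, ← Real.exp_add]
  apply Real.exp_le_exp.2
  have := two_le_phi hu
  nlinarith

/-- `t^n * exp(-(c*t)) ≤ n!/c^n` for `t ≥ 0`, `c > 0`. -/
lemma pow_mul_exp_neg_le {c : ℝ} (hc : 0 < c) (n : ℕ) {t : ℝ} (ht : 0 ≤ t) :
    t^n * Real.exp (-(c*t)) ≤ n.factorial / c^n := by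
  have h1 : (c*t)^n / n.factorial ≤ Real.exp (c*t) := by
    calc (c*t)^n / n.factorial ≤ ∑ i ∈ Finset.range (n+1), (c*t)^i / i.factorial := by
          exact Finset.single_le_sum (f := fun i => (c*t)^i / (i.factorial : ℝ))
            (fun i _ => by positivity) (Finset.self_mem_range_succ n)
      _ ≤ Real.exp (c*t) := Real.sum_le_exp_of_nonneg (by positivity) _
  have h2 : t^n = (c*t)^n / c^n := by rw [mul_pow]; field_simp
  rw [h2, Real.exp_neg, div_mul_eq_mul_div]
  gcongr
  rw [mul_inv_le_iff₀ (Real.exp_pos _)]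
  rw [div_le_iff₀ (by positivity : (0:ℝ) < n.factorial)] at h1
  linarith


lemma contOn_Ker (a : ℝ) : ContinuousOn (Ker a) (Ioi (0:ℝ)) := by
  apply Real.continuous_exp.comp_continuousOn
  exact (continuousOn_const.mul (continuousOn_id.add
    (continuousOn_const.div continuousOn_id (fun u hu => ne_of_gt hu))))

lemma contOn_inv : ContinuousOn (fun u : ℝ => 1/u) (Ioi (0:ℝ)) :=
  continuousOn_const.div continuousOn_id (fun u hu => ne_of_gt hu)

lemma contOn_inv' : ContinuousOn (fun u : ℝ => 1/u) (Ioc (0:ℝ) 1) :=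
  continuousOn_const.div continuousOn_id (fun u hu => ne_of_gt hu.1)

lemma contOn_inv'' : ContinuousOn (fun u : ℝ => 1/u) (Ioi (1:ℝ)) :=
  continuousOn_const.div continuousOn_id (fun u hu => ne_of_gt (lt_trans zero_lt_one hu))

/-- Master integrability: `u^p * (1/u)^s * Ker a u` is integrable on `(0,∞)`. -/
lemma integrableOn_pow_ker {a : ℝ} (ha : 0 < a) (p s : ℕ) :
    IntegrableOn (fun u => u^p * (1/u)^s * Ker a u) (Ioi (0:ℝ)) := by
  have hmeas : AEStronglyMeasurable (fun u => u^p * (1/u)^s * Ker a u)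
      (volume.restrict (Ioi (0:ℝ))) := by
    apply ContinuousOn.aestronglyMeasurable ?_ measurableSet_Ioi
    exact ((continuousOn_pow p).mul (contOn_inv.pow s)).mul (contOn_Ker a)
  set C : ℝ := (p.factorial / (a/2)^p) * (s.factorial / a^s) with hC
  apply Integrable.mono' (g := fun u => C * Real.exp (-(a/2)*u))
    ((exp_neg_integrableOn_Ioi 0 (by positivity : (0:ℝ) < a/2)).const_mul C) hmeas
  filter_upwards [ae_restrict_mem measurableSet_Ioi] with u hu
  have hu : 0 < u := hu
  have hinv : 0 < 1/u := by positivity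
  rw [neg_mul]
  simp only [Real.norm_eq_abs, abs_mul, abs_pow, abs_of_pos (Ker_pos a u), abs_of_pos hu,
    abs_of_pos hinv]
  have hker : Ker a u = Real.exp (-(a/2*u)) * Real.exp (-(a/2*u)) * Real.exp (-(a*(1/u))) := by
    rw [Ker_eq a u hu.ne']; simp only [← Real.exp_add]; congr 1; ring
  rw [hker, hC]
  have h1 : u^p * Real.exp (-(a/2*u)) ≤ p.factorial / (a/2)^p :=
    pow_mul_exp_neg_le (by positivity) p hu.le
  have h2 : (1/u)^s * Real.exp (-(a*(1/u))) ≤ s.factorial / a^s :=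
    pow_mul_exp_neg_le ha s hinv.le
  calc u^p * (1/u)^s * (Real.exp (-(a/2*u)) * Real.exp (-(a/2*u)) * Real.exp (-(a*(1/u))))
      = (u^p * Real.exp (-(a/2*u))) * ((1/u)^s * Real.exp (-(a*(1/u)))) *
        Real.exp (-(a/2*u)) := by ring
    _ ≤ (p.factorial / (a/2)^p) * (s.factorial / a^s) * Real.exp (-(a/2*u)) := by
        apply mul_le_mul_of_nonneg_right ?_ (Real.exp_pos _).le
        apply mul_le_mul h1 h2 (by positivity) (by positivity)

lemma phi_pow_le {u : ℝ} (hu : 0 < u) (j : ℕ) :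
    (u + 1/u)^j ≤ 2^j * (u^j + (1/u)^j) := by
  have h1 : u + 1/u ≤ 2 * max u (1/u) := by
    rcases le_total u (1/u) with h | h
    · rw [max_eq_right h]; linarith
    · rw [max_eq_left h]; linarith
  calc (u + 1/u)^j ≤ (2 * max u (1/u))^j :=
        pow_le_pow_left₀ (by positivity) h1 j
    _ = 2^j * (max u (1/u))^j := mul_pow 2 _ j
    _ ≤ 2^j * (u^j + (1/u)^j) := by
        gcongr
        rcases le_total u (1/u) with h | h
        · rw [max_eq_right h]; nlinarith [pow_nonneg hu.le j, pow_nonneg (by positivity : (0:ℝ) ≤ 1/u) j]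
        · rw [max_eq_left h]; nlinarith [pow_nonneg hu.le j, pow_nonneg (by positivity : (0:ℝ) ≤ 1/u) j]

/-- Master integrability II : `(u+1/u)^j * (1/u)^s * Ker a u` integrable on `(0,∞)`. -/
lemma integrableOn_phi_ker {a : ℝ} (ha : 0 < a) (j s : ℕ) :
    IntegrableOn (fun u => (u + 1/u)^j * (1/u)^s * Ker a u) (Ioi (0:ℝ)) := by
  have hmeas : AEStronglyMeasurable (fun u => (u+1/u)^j * (1/u)^s * Ker a u)
      (volume.restrict (Ioi (0:ℝ))) := by
    apply ContinuousOn.aestronglyMeasurable ?_ measurableSet_Ioi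
    exact (((continuousOn_id.add contOn_inv).pow j).mul (contOn_inv.pow s)).mul (contOn_Ker a)
  apply Integrable.mono'
    (g := fun u => 2^j * (u^j * (1/u)^s * Ker a u + (1/u)^(j+s) * Ker a u))
    ?_ hmeas
  · filter_upwards [ae_restrict_mem measurableSet_Ioi] with u hu
    have hu : 0 < u := hu
    have hinv : 0 < 1/u := by positivity
    have hker := (Ker_pos a u).le
    rw [Real.norm_eq_abs, abs_mul, abs_mul, abs_of_nonneg hker,
      abs_of_nonneg (pow_nonneg (phi_pos hu).le j), abs_of_nonneg (pow_nonneg hinv.le s)]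
    calc (u+1/u)^j * (1/u)^s * Ker a u
        ≤ (2^j * (u^j + (1/u)^j)) * (1/u)^s * Ker a u := by
          apply mul_le_mul_of_nonneg_right ?_ hker
          exact mul_le_mul_of_nonneg_right (phi_pow_le hu j) (pow_nonneg hinv.le s)
      _ = 2^j * (u^j * (1/u)^s * Ker a u + (1/u)^(j+s) * Ker a u) := by
          rw [pow_add]; ring
  · apply Integrable.const_mul
    have h2 : IntegrableOn (fun u => (1/u)^(j+s) * Ker a u) (Ioi (0:ℝ)) := by
      have := integrableOn_pow_ker ha 0 (j+s)
      exact this.congr_fun (fun u _ => by ring) measurableSet_Ioi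
    exact (integrableOn_pow_ker ha j s).add h2

/-- limits of the master integrand at `∞`. -/
lemma tendsto_phi_ker_atTop {a : ℝ} (ha : 0 < a) (j s : ℕ) :
    Tendsto (fun u => (u + 1/u)^j * (1/u)^s * Ker a u) atTop (𝓝 0) := by
  have hb : Tendsto (fun u : ℝ => (2^j * (j.factorial / (a/2)^j)) * Real.exp (-(a/2*u)))
      atTop (𝓝 0) := by
    rw [show (0:ℝ) = (2^j * (j.factorial / (a/2)^j)) * 0 by ring]
    apply Tendsto.const_mul
    have := Real.tendsto_exp_neg_atTop_nhds_zero.comp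
      (Tendsto.const_mul_atTop (by positivity : (0:ℝ) < a/2) tendsto_id)
    simpa [Function.comp_def] using this
  apply squeeze_zero_norm' ?_ hb
  filter_upwards [eventually_ge_atTop (1:ℝ)] with u hu
  have hu0 : 0 < u := lt_of_lt_of_le one_pos hu
  have hinv : 0 < 1/u := by positivity
  have hinv1 : 1/u ≤ 1 := by rw [div_le_one hu0]; exact hu
  rw [Real.norm_eq_abs, abs_mul, abs_mul, abs_of_pos (Ker_pos a u),
    abs_of_nonneg (pow_nonneg (phi_pos hu0).le j), abs_of_nonneg (pow_nonneg hinv.le s)]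
  have h1 : (u + 1/u)^j ≤ (2*u)^j := by
    apply pow_le_pow_left₀ (phi_pos hu0).le
    have : 1/u ≤ u := le_trans hinv1 hu
    linarith
  have h2 : (1/u)^s ≤ 1 := pow_le_one₀ hinv.le hinv1
  have h3 : Ker a u ≤ Real.exp (-(a/2*u)) * Real.exp (-(a/2*u)) := by
    have : Ker a u ≤ Real.exp (-(a*u)) := Ker_le_exp_mul ha.le hu0
    rw [← Real.exp_add] at *
    apply this.trans (Real.exp_le_exp.2 (by linarith))
  calc (u+1/u)^j * (1/u)^s * Ker a u
      ≤ (2*u)^j * 1 * (Real.exp (-(a/2*u)) * Real.exp (-(a/2*u))) := by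
        apply mul_le_mul (mul_le_mul h1 h2 (pow_nonneg hinv.le s) (by positivity)) h3
          (Ker_pos a u).le (by positivity)
    _ = 2^j * ((u^j * Real.exp (-(a/2*u))) * Real.exp (-(a/2*u))) := by
        rw [mul_pow]; ring
    _ ≤ 2^j * ((j.factorial / (a/2)^j) * Real.exp (-(a/2*u))) := by
        gcongr
        exact pow_mul_exp_neg_le (by positivity) j hu0.le
    _ = (2^j * (j.factorial / (a/2)^j)) * Real.exp (-(a/2*u)) := by ring

/-- limits of the master integrand at `0⁺`. -/
lemma tendsto_phi_ker_zero {a : ℝ} (ha : 0 < a) (j s : ℕ) :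
    Tendsto (fun u => (u + 1/u)^j * (1/u)^s * Ker a u) (𝓝[>] (0:ℝ)) (𝓝 0) := by
  have hb : Tendsto (fun u : ℝ => (2^j * ((j+s).factorial / (a/2)^(j+s))) *
      Real.exp (-(a/2*(1/u)))) (𝓝[>] (0:ℝ)) (𝓝 0) := by
    rw [show (0:ℝ) = (2^j * ((j+s).factorial / (a/2)^(j+s))) * 0 by ring]
    apply Tendsto.const_mul
    have h1 : Tendsto (fun u : ℝ => 1/u) (𝓝[>] (0:ℝ)) atTop := (by simpa [one_div] using (tendsto_inv_nhdsGT_zero : Tendsto (fun x : ℝ => x⁻¹) (𝓝[>] (0:ℝ)) atTop))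
    have := Real.tendsto_exp_neg_atTop_nhds_zero.comp
      ((Tendsto.const_mul_atTop (by positivity : (0:ℝ) < a/2) tendsto_id).comp h1)
    simpa [Function.comp_def] using this
  apply squeeze_zero_norm' ?_ hb
  filter_upwards [Ioc_mem_nhdsGT_of_mem (by norm_num : (0:ℝ) ∈ Ico (0:ℝ) 1)] with u hu
  obtain ⟨hu0, hu1⟩ := hu
  have hinv : 0 < 1/u := by positivity
  have hle : u ≤ 1/u := by
    rw [le_div_iff₀ hu0]; nlinarith
  rw [Real.norm_eq_abs, abs_mul, abs_mul, abs_of_pos (Ker_pos a u),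
    abs_of_nonneg (pow_nonneg (phi_pos hu0).le j), abs_of_nonneg (pow_nonneg hinv.le s)]
  have h1 : (u + 1/u)^j ≤ (2*(1/u))^j := by
    apply pow_le_pow_left₀ (phi_pos hu0).le; linarith
  have h3 : Ker a u ≤ Real.exp (-(a/2*(1/u))) * Real.exp (-(a/2*(1/u))) := by
    have : Ker a u ≤ Real.exp (-(a*(1/u))) := Ker_le_exp_div ha.le hu0
    rw [← Real.exp_add] at *
    apply this.trans (Real.exp_le_exp.2 (by linarith))
  calc (u+1/u)^j * (1/u)^s * Ker a u
      ≤ (2*(1/u))^j * (1/u)^s * (Real.exp (-(a/2*(1/u))) * Real.exp (-(a/2*(1/u)))) := by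
        apply mul_le_mul (mul_le_mul_of_nonneg_right h1 (pow_nonneg hinv.le s)) h3
          (Ker_pos a u).le (by positivity)
    _ = 2^j * (((1/u)^(j+s) * Real.exp (-(a/2*(1/u)))) * Real.exp (-(a/2*(1/u)))) := by
        rw [mul_pow, pow_add]; ring
    _ ≤ 2^j * (((j+s).factorial / (a/2)^(j+s)) * Real.exp (-(a/2*(1/u)))) := by
        gcongr
        exact pow_mul_exp_neg_le (by positivity) (j+s) hinv.le
    _ = (2^j * ((j+s).factorial / (a/2)^(j+s))) * Real.exp (-(a/2*(1/u))) := by ring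


/-- FTC on `(0,∞)` with limits at both endpoints. -/
lemma integral_Ioi_zero_eq {g g' : ℝ → ℝ} (hd : ∀ x ∈ Ioi (0:ℝ), HasDerivAt g (g' x) x)
    (hi : IntegrableOn g' (Ioi (0:ℝ))) {L0 Li : ℝ}
    (h0 : Tendsto g (𝓝[>] (0:ℝ)) (𝓝 L0)) (hinf : Tendsto g atTop (𝓝 Li)) :
    ∫ x in Ioi (0:ℝ), g' x = Li - L0 := by
  have step : ∀ ε : ℝ, 0 < ε → ∫ x in Ioi ε, g' x = Li - g ε := by
    intro ε hε
    apply integral_Ioi_of_hasDerivAt_of_tendsto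
      (hd ε hε).continuousAt.continuousWithinAt
      (fun x hx => hd x (hε.trans hx))
      (hi.mono_set (Ioi_subset_Ioi hε.le)) hinf
  have hseq : Tendsto (fun n : ℕ => 1/((n:ℝ)+1)) atTop (𝓝[>] (0:ℝ)) := by
    apply tendsto_nhdsWithin_of_tendsto_nhds_of_eventually_within _
      tendsto_one_div_add_atTop_nhds_zero_nat
    filter_upwards with n
    exact mem_Ioi.2 (by positivity)
  have hunion : (⋃ n : ℕ, Ioi (1/((n:ℝ)+1))) = Ioi (0:ℝ) := by
    ext x
    simp only [mem_iUnion, mem_Ioi]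
    constructor
    · rintro ⟨n, hn⟩; exact lt_trans (by positivity) hn
    · intro hx
      obtain ⟨n, hn⟩ := exists_nat_one_div_lt hx
      exact ⟨n, hn⟩
  have hmono : Monotone (fun n : ℕ => Ioi (1/((n:ℝ)+1))) := by
    intro m n hmn
    apply Ioi_subset_Ioi
    have hmn' : (m:ℝ) ≤ (n:ℝ) := Nat.cast_le.2 hmn
    exact one_div_le_one_div_of_le (by positivity) (by linarith)
  have t1 := tendsto_setIntegral_of_monotone (fun n : ℕ => measurableSet_Ioi) hmono
    (hunion ▸ hi)
  rw [hunion] at t1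
  have t2 : Tendsto (fun n : ℕ => ∫ x in Ioi (1/((n:ℝ)+1)), g' x) atTop (𝓝 (Li - L0)) := by
    have : Tendsto (fun n : ℕ => Li - g (1/((n:ℝ)+1))) atTop (𝓝 (Li - L0)) :=
      tendsto_const_nhds.sub (h0.comp hseq)
    apply this.congr
    intro n
    exact (step _ (by positivity)).symm
  exact tendsto_nhds_unique t1 t2

lemma integral_exp_neg_mul {c : ℝ} (hc : 0 < c) :
    ∫ u in Ioi (0:ℝ), Real.exp (-(c*u)) = 1/c := by
  have hd : ∀ u ∈ Ioi (0:ℝ), HasDerivAt (fun u => -(1/c) * Real.exp (-(c*u)))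
      (Real.exp (-(c*u))) u := by
    intro u _
    have h1 : HasDerivAt (fun u : ℝ => -(c*u)) (-c) u := by
      simpa using ((hasDerivAt_id u).const_mul c).fun_neg
    have hder := (h1.exp).const_mul (-(1/c))
    have heq : Real.exp (-(c*u)) = -(1/c) * (Real.exp (-(c*u)) * (-c)) := by
      field_simp
    rw [heq]; exact hder
  have hi : IntegrableOn (fun u => Real.exp (-(c*u))) (Ioi (0:ℝ)) := by
    have := exp_neg_integrableOn_Ioi 0 hc
    apply this.congr_fun (fun u _ => by rw [neg_mul]) measurableSet_Ioi
  have h0 : Tendsto (fun u => -(1/c) * Real.exp (-(c*u))) (𝓝[>] (0:ℝ)) (𝓝 (-(1/c))) := by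
    have hca : ContinuousAt (fun u => -(1/c) * Real.exp (-(c*u))) 0 := by fun_prop
    have h2 : Tendsto (fun u => -(1/c) * Real.exp (-(c*u))) (𝓝[>] (0:ℝ))
        (𝓝 (-(1/c) * Real.exp (-(c*0)))) := hca.tendsto.mono_left nhdsWithin_le_nhds
    simpa using h2
  have hinf : Tendsto (fun u => -(1/c) * Real.exp (-(c*u))) atTop (𝓝 0) := by
    rw [show (0:ℝ) = -(1/c) * 0 by ring]
    apply Tendsto.const_mul
    have := Real.tendsto_exp_neg_atTop_nhds_zero.comp
      (Tendsto.const_mul_atTop hc tendsto_id)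
    simpa [Function.comp_def] using this
  rw [integral_Ioi_zero_eq hd hi h0 hinf]
  ring

lemma integrableOn_inv_sq_exp {c : ℝ} (hc : 0 < c) :
    IntegrableOn (fun u => (1/u)^2 * Real.exp (-(c*(1/u)))) (Ioi (0:ℝ)) := by
  rw [← Ioc_union_Ioi_eq_Ioi (zero_le_one' ℝ), integrableOn_union]
  constructor
  · apply Integrable.mono' (g := fun _ => (2:ℝ) / c^2)
      (integrableOn_const measure_Ioc_lt_top.ne)
    · apply ContinuousOn.aestronglyMeasurable ?_ measurableSet_Ioc
      apply ContinuousOn.mul (contOn_inv'.pow 2)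
      apply Real.continuous_exp.comp_continuousOn
      exact (continuousOn_const.mul contOn_inv').neg
    · filter_upwards [ae_restrict_mem measurableSet_Ioc] with u hu
      have hu0 : 0 < u := hu.1
      have hinv : 0 < 1/u := by positivity
      rw [Real.norm_eq_abs, abs_mul, abs_pow, abs_of_pos hinv,
        abs_of_pos (Real.exp_pos _)]
      have := pow_mul_exp_neg_le hc 2 hinv.le
      calc (1/u)^2 * Real.exp (-(c*(1/u))) ≤ (2).factorial / c^2 := this
        _ = 2 / c^2 := by norm_num
  · apply Integrable.mono' (g := fun u => u^(-2 : ℝ))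
      (integrableOn_Ioi_rpow_of_lt (by norm_num) zero_lt_one)
    · apply ContinuousOn.aestronglyMeasurable ?_ measurableSet_Ioi
      apply ContinuousOn.mul (contOn_inv''.pow 2)
      apply Real.continuous_exp.comp_continuousOn
      exact (continuousOn_const.mul contOn_inv'').neg
    · filter_upwards [ae_restrict_mem measurableSet_Ioi] with u hu
      have hu0 : 0 < u := lt_trans zero_lt_one hu
      have hinv : 0 < 1/u := by positivity
      rw [Real.norm_eq_abs, abs_mul, abs_pow, abs_of_pos hinv,
        abs_of_pos (Real.exp_pos _)]
      calc (1/u)^2 * Real.exp (-(c*(1/u))) ≤ (1/u)^2 * 1 := by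
            apply mul_le_mul_of_nonneg_left ?_ (by positivity)
            exact Real.exp_le_one_iff.2 (by rw [neg_nonpos]; positivity)
        _ = u^(-2 : ℝ) := by
            rw [mul_one]
            have h4 : u^(-2:ℝ) = (u^(2:ℕ))⁻¹ := by
              rw [← Real.rpow_natCast u 2, ← Real.rpow_neg hu0.le]; norm_num
            rw [h4, div_pow, one_pow, one_div]

lemma integral_inv_sq_exp {c : ℝ} (hc : 0 < c) :
    ∫ u in Ioi (0:ℝ), (1/u)^2 * Real.exp (-(c*(1/u))) = 1/c := by
  have hd : ∀ u ∈ Ioi (0:ℝ), HasDerivAt (fun u => (1/c) * Real.exp (-(c*(1/u))))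
      ((1/u)^2 * Real.exp (-(c*(1/u)))) u := by
    intro u hu
    have hu : (0:ℝ) < u := hu
    have h1 : HasDerivAt (fun u : ℝ => -(c*(1/u))) (c/u^2) u := by
      have h2 : HasDerivAt (fun u : ℝ => 1/u) (-(1/u^2)) u := by
        simpa [one_div] using (hasDerivAt_inv hu.ne')
      have := (h2.const_mul c).fun_neg
      refine this.congr_deriv ?_
      ring
    have hder := (h1.exp).const_mul (1/c)
    have heq : (1/u)^2 * Real.exp (-(c*(1/u))) = 1/c * (Real.exp (-(c*(1/u))) * (c/u^2)) := by
      field_simp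
    rw [heq]; exact hder
  have h0 : Tendsto (fun u => (1/c) * Real.exp (-(c*(1/u)))) (𝓝[>] (0:ℝ)) (𝓝 0) := by
    rw [show (0:ℝ) = (1/c) * 0 by ring]
    apply Tendsto.const_mul
    have h1 : Tendsto (fun u : ℝ => 1/u) (𝓝[>] (0:ℝ)) atTop := by
      simpa [one_div] using (tendsto_inv_nhdsGT_zero : Tendsto (fun x : ℝ => x⁻¹) (𝓝[>] (0:ℝ)) atTop)
    have := Real.tendsto_exp_neg_atTop_nhds_zero.comp
      ((Tendsto.const_mul_atTop hc tendsto_id).comp h1)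
    simpa [Function.comp_def] using this
  have hinf : Tendsto (fun u => (1/c) * Real.exp (-(c*(1/u)))) atTop (𝓝 (1/c)) := by
    have h1 : Tendsto (fun u : ℝ => 1/u) atTop (𝓝 0) := by
      simpa [one_div] using (tendsto_inv_atTop_zero : Tendsto (fun x : ℝ => x⁻¹) atTop (𝓝 0))
    have h2 : Tendsto (fun u : ℝ => Real.exp (-(c*(1/u)))) atTop (𝓝 (Real.exp (-(c*0)))) :=
      (Real.continuous_exp.tendsto _).comp ((h1.const_mul c).neg)
    have h3 := h2.const_mul (1/c)
    simpa using h3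
  rw [integral_Ioi_zero_eq hd (integrableOn_inv_sq_exp hc) h0 hinf]
  ring


/-- `J j x = ∫₀^∞ (u+1/u)^j exp(-(x/2)(u+1/u)) du/u`. -/
noncomputable def J (j : ℕ) (x : ℝ) : ℝ :=
  ∫ u in Ioi (0:ℝ), (u + 1/u)^j * Ker (x/2) u / u

lemma Ker_anti {a b u : ℝ} (hab : a ≤ b) (hu : 0 < u) : Ker b u ≤ Ker a u := by
  apply Real.exp_le_exp.2
  have := phi_pos hu
  nlinarith

lemma integrable_Jint {a : ℝ} (ha : 0 < a) (j : ℕ) :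
    IntegrableOn (fun u => (u + 1/u)^j * Ker a u / u) (Ioi (0:ℝ)) :=
  (integrableOn_phi_ker ha j 1).congr_fun (fun u _ => by ring) measurableSet_Ioi

lemma contOn_Jint (a : ℝ) (j : ℕ) :
    ContinuousOn (fun u => (u + 1/u)^j * Ker a u / u) (Ioi (0:ℝ)) :=
  (((continuousOn_id.add contOn_inv).pow j).mul (contOn_Ker a)).div
    continuousOn_id (fun u hu => ne_of_gt hu)

lemma Jint_nonneg {a : ℝ} {j : ℕ} {u : ℝ} (hu : 0 < u) :
    0 ≤ (u + 1/u)^j * Ker a u / u := by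
  have h1 := phi_pos hu
  have h2 := Ker_pos a u
  positivity

lemma J_nonneg (j : ℕ) (x : ℝ) : 0 ≤ J j x :=
  setIntegral_nonneg measurableSet_Ioi (fun u hu => Jint_nonneg hu)

lemma hasDerivAt_J (j : ℕ) {x : ℝ} (hx : 0 < x) :
    HasDerivAt (J j) (-(1/2) * J (j+1) x) x := by
  set μ := volume.restrict (Ioi (0:ℝ))
  have key := hasDerivAt_integral_of_dominated_loc_of_deriv_le
    (F := fun y u => (u + 1/u)^j * Ker (y/2) u / u)
    (F' := fun y u => -(1/2) * ((u + 1/u)^(j+1) * Ker (y/2) u / u))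
    (x₀ := x) (s := Metric.ball x (x/2)) (μ := μ)
    (bound := fun u => (1/2) * ((u + 1/u)^(j+1) * Ker (x/4) u / u))
    (Metric.ball_mem_nhds x (by positivity))
    ?_ ?_ ?_ ?_ ?_ ?_
  · have h2 := key.2
    have h3 : ∫ u, -(1/2) * ((u + 1/u)^(j+1) * Ker (x/2) u / u) ∂μ
        = -(1/2) * J (j+1) x := integral_const_mul _ _
    rw [h3] at h2
    exact h2
  · filter_upwards with y
    exact (contOn_Jint (y/2) j).aestronglyMeasurable measurableSet_Ioi
  · exact integrable_Jint (by positivity) j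
  · exact ((continuousOn_const.mul (contOn_Jint (x/2) (j+1))).aestronglyMeasurable
      measurableSet_Ioi)
  · rw [ae_restrict_iff' measurableSet_Ioi]
    filter_upwards with u hu
    intro y hy
    have hu : 0 < u := hu
    have hy2 : x/2 < y := by
      rw [Metric.mem_ball, Real.dist_eq, abs_lt] at hy
      linarith [hy.1]
    have hker : Ker (y/2) u ≤ Ker (x/4) u := Ker_anti (by linarith) hu
    rw [norm_mul, Real.norm_eq_abs, Real.norm_eq_abs,
      abs_of_nonneg (Jint_nonneg hu : (0:ℝ) ≤ (u + 1/u)^(j+1) * Ker (y/2) u / u),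
      (by norm_num : |(-(1/2) : ℝ)| = 1/2)]
    apply mul_le_mul_of_nonneg_left ?_ (by norm_num : (0:ℝ) ≤ 1/2)
    rw [div_le_div_iff_of_pos_right hu]
    exact mul_le_mul_of_nonneg_left hker (pow_nonneg (phi_pos hu).le _)
  · exact (((integrable_Jint (by positivity : (0:ℝ) < x/4) (j+1))).const_mul _)
  · rw [ae_restrict_iff' measurableSet_Ioi]
    filter_upwards with u hu
    intro y _
    have hu : 0 < u := hu
    have hfun : (fun y : ℝ => -(y/2) * (u + 1/u)) = fun y => y * (-((u + 1/u)/2)) := by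
      funext y; ring
    have h1 : HasDerivAt (fun y : ℝ => -(y/2) * (u + 1/u)) (-((u + 1/u)/2)) y := by
      rw [hfun]; exact hasDerivAt_mul_const _
    have h2 := ((h1.exp).div_const u).const_mul ((u + 1/u)^j)
    have heq : -(1/2) * ((u + 1/u)^(j+1) * Ker (y/2) u / u)
        = (u + 1/u)^j * (Real.exp (-(y/2) * (u + 1/u)) * -((u + 1/u)/2) / u) := by
      rw [Ker, pow_succ]; ring
    rw [show (fun y : ℝ => (u + 1/u)^j * Ker (y/2) u / u)
        = fun y : ℝ => (u + 1/u)^j * (Real.exp (-(y/2) * (u + 1/u)) / u) by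
      funext y; rw [Ker]; ring, heq]
    exact h2

lemma K0_eq (y : ℝ) : K0 y = (1/2) * J 0 y := by
  rw [K0, J]
  simp only [Ker, pow_zero, one_mul]

/-- `D1 = K0'` and `D2 = K0''` on `(0,∞)`. -/
noncomputable def D1 (x : ℝ) : ℝ := -(1/4) * J 1 x
noncomputable def D2 (x : ℝ) : ℝ := (1/8) * J 2 x

lemma hasDerivAt_K0 {x : ℝ} (hx : 0 < x) : HasDerivAt K0 (D1 x) x := by
  have : K0 = fun y => (1/2) * J 0 y := funext K0_eq
  rw [this]
  have := (hasDerivAt_J 0 hx).const_mul (1/2 : ℝ)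
  refine this.congr_deriv ?_
  rw [D1]; ring

lemma hasDerivAt_D1 {x : ℝ} (hx : 0 < x) : HasDerivAt D1 (D2 x) x := by
  have := (hasDerivAt_J 1 hx).const_mul (-(1/4) : ℝ)
  refine this.congr_deriv ?_
  rw [D2]; ring

lemma D1_nonpos (x : ℝ) : D1 x ≤ 0 := by
  rw [D1]
  have := J_nonneg 1 x
  linarith

lemma K0_nonneg (x : ℝ) : 0 ≤ K0 x := by
  rw [K0_eq]
  have := J_nonneg 0 x
  linarith

/-- The Bessel ODE: `x K0'' + K0' - x K0 = 0` on `(0,∞)`. -/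
lemma bessel_ode {x : ℝ} (hx : 0 < x) : x * D2 x + D1 x - x * K0 x = 0 := by
  have hx2 : (0:ℝ) < x/2 := by positivity
  have key : x * J 2 x - 2 * J 1 x - 4 * x * J 0 x = 0 := by
    have hsplit : x * J 2 x - 2 * J 1 x - 4 * x * J 0 x
        = ∫ u in Ioi (0:ℝ),
            (x * ((u + 1/u)^2 * Ker (x/2) u / u) - 2 * ((u + 1/u)^1 * Ker (x/2) u / u)
              - 4 * x * ((u + 1/u)^0 * Ker (x/2) u / u)) := by
      have i12 : IntegrableOn (fun u => x * ((u + 1/u)^2 * Ker (x/2) u / u)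
          - 2 * ((u + 1/u)^1 * Ker (x/2) u / u)) (Ioi (0:ℝ)) :=
        ((integrable_Jint hx2 2).const_mul x).sub ((integrable_Jint hx2 1).const_mul 2)
      rw [J, J, J, ← integral_const_mul, ← integral_const_mul, ← integral_const_mul,
        ← integral_sub ((integrable_Jint hx2 2).const_mul x)
          ((integrable_Jint hx2 1).const_mul 2),
        ← integral_sub i12 ((integrable_Jint hx2 0).const_mul (4*x))]
    rw [hsplit]
    have hd : ∀ u ∈ Ioi (0:ℝ), HasDerivAt (fun u => -2 * (u - 1/u) * Ker (x/2) u)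
        (x * ((u + 1/u)^2 * Ker (x/2) u / u) - 2 * ((u + 1/u)^1 * Ker (x/2) u / u)
          - 4 * x * ((u + 1/u)^0 * Ker (x/2) u / u)) u := by
      intro u hu
      have hu : 0 < u := hu
      have h1 : HasDerivAt (fun u : ℝ => u - 1/u) (1 + 1/u^2) u := by
        have := (hasDerivAt_id u).fun_sub ((hasDerivAt_inv hu.ne'))
        simpa [one_div] using this
      have ha : HasDerivAt (fun u : ℝ => u + 1/u) (1 - 1/u^2) u := by
        have h7 := (hasDerivAt_id u).fun_add (hasDerivAt_inv hu.ne')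
        have h8 : (fun u : ℝ => id u + u⁻¹) = fun u : ℝ => u + 1/u := by
          funext v; simp [one_div]
        rw [h8] at h7
        refine h7.congr_deriv ?_
        rw [one_div]; ring
      have h2 : HasDerivAt (fun u : ℝ => Ker (x/2) u) (Real.exp (-(x/2) * (u + 1/u)) *
          (-(x/2) * (1 - 1/u^2))) u := by
        simp only [Ker]
        exact (ha.const_mul (-(x/2) : ℝ)).exp
      have h3 := (h1.fun_mul h2).const_mul (-2 : ℝ)
      have hfun : (fun u : ℝ => -2 * (u - 1/u) * Ker (x/2) u)
          = fun u : ℝ => -2 * ((u - 1/u) * Ker (x/2) u) := by funext v; ring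
      rw [hfun]
      refine h3.congr_deriv ?_
      simp only [Ker]
      have hune : u ≠ 0 := hu.ne'
      field_simp
      ring
    have hint : IntegrableOn (fun u =>
        x * ((u + 1/u)^2 * Ker (x/2) u / u) - 2 * ((u + 1/u)^1 * Ker (x/2) u / u)
          - 4 * x * ((u + 1/u)^0 * Ker (x/2) u / u)) (Ioi (0:ℝ)) :=
      (((integrable_Jint hx2 2).const_mul x).sub ((integrable_Jint hx2 1).const_mul 2)).sub
        ((integrable_Jint hx2 0).const_mul (4*x))
    have h0 : Tendsto (fun u => -2 * (u - 1/u) * Ker (x/2) u) (𝓝[>] (0:ℝ)) (𝓝 0) := by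
      have hb := (tendsto_phi_ker_zero hx2 1 0).const_mul (2:ℝ)
      rw [mul_zero] at hb
      apply squeeze_zero_norm' ?_ hb
      filter_upwards [self_mem_nhdsWithin] with u hu
      have hu : 0 < u := hu
      rw [norm_mul, norm_mul, Real.norm_eq_abs, Real.norm_eq_abs, Real.norm_eq_abs,
        abs_of_pos (Ker_pos _ _)]
      have h5 : |u - 1/u| ≤ u + 1/u := by
        rw [abs_le]; constructor <;> [skip; skip] <;> (have : 0 < 1/u := by positivity) <;> linarith
      calc |(-2 : ℝ)| * |u - 1/u| * Ker (x/2) u ≤ 2 * ((u + 1/u) * Ker (x/2) u) := by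
            rw [abs_neg, abs_two]
            rw [mul_assoc]
            gcongr
            exact (Ker_pos _ _).le
        _ = 2 * ((u + 1/u)^1 * (1/u)^0 * Ker (x/2) u) := by ring
    have hinf : Tendsto (fun u => -2 * (u - 1/u) * Ker (x/2) u) atTop (𝓝 0) := by
      have hb := (tendsto_phi_ker_atTop hx2 1 0).const_mul (2:ℝ)
      rw [mul_zero] at hb
      apply squeeze_zero_norm' ?_ hb
      filter_upwards [eventually_gt_atTop (0:ℝ)] with u hu
      rw [norm_mul, norm_mul, Real.norm_eq_abs, Real.norm_eq_abs, Real.norm_eq_abs,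
        abs_of_pos (Ker_pos _ _)]
      have h5 : |u - 1/u| ≤ u + 1/u := by
        rw [abs_le]; constructor <;> (have : 0 < 1/u := by positivity) <;> linarith
      calc |(-2 : ℝ)| * |u - 1/u| * Ker (x/2) u ≤ 2 * ((u + 1/u) * Ker (x/2) u) := by
            rw [abs_neg, abs_two]
            rw [mul_assoc]
            gcongr
            exact (Ker_pos _ _).le
        _ = 2 * ((u + 1/u)^1 * (1/u)^0 * Ker (x/2) u) := by ring
    rw [integral_Ioi_zero_eq hd hint h0 hinf]
    ring
  rw [D1, D2, K0_eq]
  linear_combination (1/8) * key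


lemma exp_neg_le_rpow {t : ℝ} (ht : 0 < t) : Real.exp (-t) ≤ t^(-(1/4):ℝ) := by
  rw [Real.rpow_neg ht.le, Real.exp_neg]
  apply inv_anti₀ (Real.rpow_pos_of_pos ht _)
  have h1 : t^((1/4):ℝ) ≤ max 1 t := by
    rcases le_total t 1 with h | h
    · exact le_max_of_le_left (Real.rpow_le_one ht.le h (by norm_num))
    · apply le_max_of_le_right
      calc t^((1/4):ℝ) ≤ t^((1:ℝ)) := Real.rpow_le_rpow_of_exponent_le h (by norm_num)
        _ = t := Real.rpow_one t
  apply h1.trans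
  apply max_le (Real.one_le_exp ht.le)
  linarith [Real.add_one_le_exp t]

lemma integrable_KerDiv {b : ℝ} (hb : 0 < b) :
    IntegrableOn (fun u => Ker b u / u) (Ioi (0:ℝ)) :=
  (integrableOn_pow_ker hb 0 1).congr_fun (fun u _ => by ring) measurableSet_Ioi

lemma rpow_aux1 {b u : ℝ} (hb : 0 < b) (hu : 0 < u) :
    (b*(1/u))^(-(1/4):ℝ)/u = b^(-(1/4):ℝ) * u^(-(3/4):ℝ) := by
  rw [Real.mul_rpow hb.le (by positivity), div_eq_mul_inv, mul_assoc]
  congr 1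
  rw [one_div, Real.inv_rpow hu.le, ← Real.rpow_neg hu.le, ← Real.rpow_neg_one u,
    ← Real.rpow_add hu]
  norm_num

lemma rpow_aux2 {b u : ℝ} (hb : 0 < b) (hu : 0 < u) :
    (b*u)^(-(1/4):ℝ)/u = b^(-(1/4):ℝ) * u^(-(5/4):ℝ) := by
  rw [Real.mul_rpow hb.le hu.le, div_eq_mul_inv, mul_assoc]
  congr 1
  rw [← Real.rpow_neg_one u, ← Real.rpow_add hu]
  norm_num

lemma intKer_le {b : ℝ} (hb : 0 < b) :
    ∫ u in Ioi (0:ℝ), Ker b u / u ≤ 8 * b^(-(1/4):ℝ) := by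
  have hsplit : ∫ u in Ioi (0:ℝ), Ker b u / u
      = (∫ u in Ioc (0:ℝ) 1, Ker b u / u) + ∫ u in Ioi (1:ℝ), Ker b u / u := by
    rw [← setIntegral_union (Ioc_disjoint_Ioi le_rfl) measurableSet_Ioi
      ((integrable_KerDiv hb).mono_set Ioc_subset_Ioi_self)
      ((integrable_KerDiv hb).mono_set (Ioi_subset_Ioi zero_le_one)),
      Ioc_union_Ioi_eq_Ioi zero_le_one]
  rw [hsplit]
  have hp1 : ∫ u in Ioc (0:ℝ) 1, Ker b u / u ≤ 4 * b^(-(1/4):ℝ) := by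
    have hmono : ∫ u in Ioc (0:ℝ) 1, Ker b u / u
        ≤ ∫ u in Ioc (0:ℝ) 1, b^(-(1/4):ℝ) * u^(-(3/4):ℝ) := by
      apply setIntegral_mono_on ((integrable_KerDiv hb).mono_set Ioc_subset_Ioi_self)
        (((intervalIntegral.intervalIntegrable_rpow' (a:=0) (b:=1)
          (by norm_num : (-1:ℝ) < -(3/4))).1).const_mul _)
        measurableSet_Ioc
      intro u hu
      have hu0 : 0 < u := hu.1
      rw [← rpow_aux1 hb hu0, div_le_div_iff_of_pos_right hu0]
      exact (Ker_le_exp_div hb.le hu0).trans (exp_neg_le_rpow (by positivity))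
    have hval : ∫ u in Ioc (0:ℝ) 1, b^(-(1/4):ℝ) * u^(-(3/4):ℝ) = 4 * b^(-(1/4):ℝ) := by
      rw [integral_const_mul, ← intervalIntegral.integral_of_le zero_le_one,
        integral_rpow (Or.inl (by norm_num : (-1:ℝ) < -(3/4)))]
      rw [Real.zero_rpow (by norm_num : (-(3/4):ℝ) + 1 ≠ 0), Real.one_rpow]
      ring
    rw [hval] at hmono
    exact hmono
  have hp2 : ∫ u in Ioi (1:ℝ), Ker b u / u ≤ 4 * b^(-(1/4):ℝ) := by
    have hmono : ∫ u in Ioi (1:ℝ), Ker b u / u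
        ≤ ∫ u in Ioi (1:ℝ), b^(-(1/4):ℝ) * u^(-(5/4):ℝ) := by
      apply setIntegral_mono_on ((integrable_KerDiv hb).mono_set (Ioi_subset_Ioi zero_le_one))
        ((integrableOn_Ioi_rpow_of_lt (by norm_num : (-(5/4):ℝ) < -1) one_pos).const_mul _)
        measurableSet_Ioi
      intro u hu
      have hu0 : 0 < u := lt_trans one_pos hu
      rw [← rpow_aux2 hb hu0, div_le_div_iff_of_pos_right hu0]
      exact (Ker_le_exp_mul hb.le hu0).trans (exp_neg_le_rpow (by positivity))
    have hval : ∫ u in Ioi (1:ℝ), b^(-(1/4):ℝ) * u^(-(5/4):ℝ) = 4 * b^(-(1/4):ℝ) := by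
      rw [integral_const_mul, integral_Ioi_rpow_of_lt (by norm_num : (-(5/4):ℝ) < -1) one_pos]
      rw [Real.one_rpow]
      norm_num
      ring
    rw [hval] at hmono
    exact hmono
  linarith

lemma J0_eq (x : ℝ) : J 0 x = ∫ u in Ioi (0:ℝ), Ker (x/2) u / u := by
  rw [J]; simp only [pow_zero, one_mul]

/-- Global bound: `K0 x ≤ 6 e^{-x/2} x^{-1/4}`. -/
lemma K0_bound {x : ℝ} (hx : 0 < x) : K0 x ≤ 6 * Real.exp (-(x/2)) * x^(-(1/4):ℝ) := by
  have hx2 : (0:ℝ) < x/2 := by positivity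
  have hx4 : (0:ℝ) < x/4 := by positivity
  have peel : ∫ u in Ioi (0:ℝ), Ker (x/2) u / u
      ≤ Real.exp (-(x/2)) * ∫ u in Ioi (0:ℝ), Ker (x/4) u / u := by
    rw [← integral_const_mul]
    apply setIntegral_mono_on (integrable_KerDiv hx2)
      ((integrable_KerDiv hx4).const_mul _) measurableSet_Ioi
    intro u hu
    have hu : 0 < u := hu
    rw [← mul_div_assoc, div_le_div_iff_of_pos_right hu]
    have hpeel := Ker_peel hx2.le hu
    rw [show x/2/2 = x/4 by ring] at hpeel
    exact hpeel
  have hint := intKer_le hx4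
  have h44 : (x/4 : ℝ)^(-(1/4):ℝ) ≤ (3/2) * x^(-(1/4):ℝ) := by
    rw [div_eq_mul_inv x 4, mul_comm x, Real.mul_rpow (by norm_num) hx.le]
    apply mul_le_mul_of_nonneg_right ?_ (Real.rpow_nonneg hx.le _)
    have h4 : ((4:ℝ)⁻¹)^(-(1/4):ℝ) = (4:ℝ)^((1/4):ℝ) := by
      rw [Real.inv_rpow (by norm_num), ← Real.rpow_neg (by norm_num)]
      norm_num
    rw [h4]
    have h5 : ((3/2:ℝ)^(4:ℕ))^((1/4):ℝ) = 3/2 := by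
      rw [← Real.rpow_natCast (3/2 : ℝ) 4, ← Real.rpow_mul (by norm_num)]
      norm_num
    calc (4:ℝ)^((1/4):ℝ) ≤ ((3/2:ℝ)^(4:ℕ))^((1/4):ℝ) :=
          Real.rpow_le_rpow (by norm_num) (by norm_num) (by norm_num)
      _ = 3/2 := h5
  rw [K0_eq, J0_eq]
  have hKnn : 0 ≤ ∫ u in Ioi (0:ℝ), Ker (x/4) u / u := by
    apply setIntegral_nonneg measurableSet_Ioi
    intro u hu
    have hu : 0 < u := hu
    have := Ker_pos (x/4) u
    positivity
  calc (1/2) * ∫ u in Ioi (0:ℝ), Ker (x/2) u / u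
      ≤ (1/2) * (Real.exp (-(x/2)) * ∫ u in Ioi (0:ℝ), Ker (x/4) u / u) :=
        mul_le_mul_of_nonneg_left peel (by norm_num)
    _ ≤ (1/2) * (Real.exp (-(x/2)) * (8 * (x/4)^(-(1/4):ℝ))) := by
        apply mul_le_mul_of_nonneg_left ?_ (by norm_num)
        exact mul_le_mul_of_nonneg_left hint (Real.exp_pos _).le
    _ ≤ (1/2) * (Real.exp (-(x/2)) * (8 * ((3/2) * x^(-(1/4):ℝ)))) := by
        apply mul_le_mul_of_nonneg_left ?_ (by norm_num)
        apply mul_le_mul_of_nonneg_left ?_ (Real.exp_pos _).le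
        exact mul_le_mul_of_nonneg_left h44 (by norm_num)
    _ = 6 * Real.exp (-(x/2)) * x^(-(1/4):ℝ) := by ring


lemma J1_le {x : ℝ} (hx : 0 < x) : J 1 x ≤ Real.exp (-(x/2)) * (8/x) := by
  have hx2 : (0:ℝ) < x/2 := by positivity
  have hx4 : (0:ℝ) < x/4 := by positivity
  have peel : J 1 x ≤ Real.exp (-(x/2)) * ∫ u in Ioi (0:ℝ), (u+1/u)^1 * Ker (x/4) u / u := by
    rw [J, ← integral_const_mul]
    apply setIntegral_mono_on (integrable_Jint hx2 1)
      ((integrable_Jint hx4 1).const_mul _) measurableSet_Ioi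
    intro u hu
    have hu : 0 < u := hu
    rw [← mul_div_assoc, div_le_div_iff_of_pos_right hu]
    have hpeel := Ker_peel hx2.le hu
    rw [show x/2/2 = x/4 by ring] at hpeel
    exact le_trans (mul_le_mul_of_nonneg_left hpeel (pow_nonneg (phi_pos hu).le 1))
      (le_of_eq (by ring))
  have hsplit : ∫ u in Ioi (0:ℝ), (u+1/u)^1 * Ker (x/4) u / u
      = (∫ u in Ioi (0:ℝ), Ker (x/4) u) + ∫ u in Ioi (0:ℝ), (1/u)^2 * Ker (x/4) u := by
    have hi0 : IntegrableOn (fun u => Ker (x/4) u) (Ioi (0:ℝ)) :=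
      (integrableOn_pow_ker hx4 0 0).congr_fun (fun u _ => by ring) measurableSet_Ioi
    have hi2 : IntegrableOn (fun u => (1/u)^2 * Ker (x/4) u) (Ioi (0:ℝ)) :=
      (integrableOn_pow_ker hx4 0 2).congr_fun (fun u _ => by ring) measurableSet_Ioi
    rw [← integral_add hi0 hi2]
    apply setIntegral_congr_fun measurableSet_Ioi
    intro u hu
    have hu : 0 < u := (hu : (0:ℝ) < u)
    field_simp
  have hb1 : ∫ u in Ioi (0:ℝ), Ker (x/4) u ≤ 4/x := by
    have hmono : ∫ u in Ioi (0:ℝ), Ker (x/4) u ≤ ∫ u in Ioi (0:ℝ), Real.exp (-(x/4*u)) := by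
      apply setIntegral_mono_on
        ((integrableOn_pow_ker hx4 0 0).congr_fun (fun u _ => by ring) measurableSet_Ioi)
        ((exp_neg_integrableOn_Ioi 0 hx4).congr_fun (fun u _ => by simp only [neg_mul])
          measurableSet_Ioi) measurableSet_Ioi
      intro u hu
      exact Ker_le_exp_mul hx4.le hu
    rw [integral_exp_neg_mul hx4] at hmono
    calc ∫ u in Ioi (0:ℝ), Ker (x/4) u ≤ 1/(x/4) := hmono
      _ = 4/x := by field_simp
  have hb2 : ∫ u in Ioi (0:ℝ), (1/u)^2 * Ker (x/4) u ≤ 4/x := by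
    have hmono : ∫ u in Ioi (0:ℝ), (1/u)^2 * Ker (x/4) u
        ≤ ∫ u in Ioi (0:ℝ), (1/u)^2 * Real.exp (-(x/4*(1/u))) := by
      apply setIntegral_mono_on
        ((integrableOn_pow_ker hx4 0 2).congr_fun (fun u _ => by ring) measurableSet_Ioi)
        (integrableOn_inv_sq_exp hx4) measurableSet_Ioi
      intro u hu
      have hu : 0 < u := hu
      exact mul_le_mul_of_nonneg_left (Ker_le_exp_div hx4.le hu) (by positivity)
    rw [integral_inv_sq_exp hx4] at hmono
    calc ∫ u in Ioi (0:ℝ), (1/u)^2 * Ker (x/4) u ≤ 1/(x/4) := hmono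
      _ = 4/x := by field_simp
  calc J 1 x ≤ Real.exp (-(x/2)) * ∫ u in Ioi (0:ℝ), (u+1/u)^1 * Ker (x/4) u / u := peel
    _ = Real.exp (-(x/2)) * ((∫ u in Ioi (0:ℝ), Ker (x/4) u)
        + ∫ u in Ioi (0:ℝ), (1/u)^2 * Ker (x/4) u) := by rw [hsplit]
    _ ≤ Real.exp (-(x/2)) * (4/x + 4/x) := by
        apply mul_le_mul_of_nonneg_left ?_ (Real.exp_pos _).le
        exact add_le_add hb1 hb2
    _ = Real.exp (-(x/2)) * (8/x) := by ring

/-- Global bound: `|x K0'(x)| ≤ 2 e^{-x/2}`. -/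
lemma xD1_bound {x : ℝ} (hx : 0 < x) : |x * D1 x| ≤ 2 * Real.exp (-(x/2)) := by
  have h1 : |x * D1 x| = x * ((1/4) * J 1 x) := by
    rw [abs_mul, abs_of_pos hx, D1]
    congr 1
    rw [abs_of_nonpos (by nlinarith [J_nonneg 1 x] : -(1/4) * J 1 x ≤ 0)]
    ring
  rw [h1]
  calc x * ((1/4) * J 1 x) ≤ x * ((1/4) * (Real.exp (-(x/2)) * (8/x))) := by
        apply mul_le_mul_of_nonneg_left ?_ hx.le
        exact mul_le_mul_of_nonneg_left (J1_le hx) (by norm_num)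
    _ = 2 * Real.exp (-(x/2)) := by field_simp; ring

lemma rpow_quarter_le {x : ℝ} (hx : 0 < x) {a : ℕ} (ha : a ≤ 4) :
    (x^(-(1/4):ℝ))^a ≤ x⁻¹ + 1 := by
  rw [← Real.rpow_natCast (x^(-(1/4):ℝ)) a, ← Real.rpow_mul hx.le]
  have hinv : 0 ≤ x⁻¹ := by positivity
  rcases le_total x 1 with h | h
  · have h2 : x^((-1:ℝ)) ≤ x⁻¹ + 1 := by
      rw [Real.rpow_neg_one]; linarith
    refine le_trans ?_ h2
    apply Real.rpow_le_rpow_of_exponent_ge hx h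
    have : (a:ℝ) ≤ 4 := by exact_mod_cast ha
    nlinarith
  · have h2 : x^((-(1/4):ℝ) * a) ≤ 1 := by
      apply Real.rpow_le_one_of_one_le_of_nonpos h
      have : (0:ℝ) ≤ a := by positivity
      nlinarith
    linarith

lemma mom_bound {a b : ℕ} (hab : a + b = 4) {m : ℕ} (hm : 1 ≤ m) {x : ℝ} (hx : 0 < x) :
    |x^m * K0 x^a * (x*D1 x)^b| ≤ 1296 * ((x^(m-1) + x^m) * Real.exp (-(2*x))) := by
  have hK := K0_nonneg x
  have hKb := K0_bound hx
  have hTb := xD1_bound hx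
  have hE : (0:ℝ) < Real.exp (-(x/2)) := Real.exp_pos _
  have hR : (0:ℝ) ≤ x^(-(1/4):ℝ) := Real.rpow_nonneg hx.le _
  have h1 : |x^m * K0 x^a * (x*D1 x)^b| = x^m * (K0 x)^a * |x*D1 x|^b := by
    rw [abs_mul, abs_mul, abs_pow, abs_pow, abs_pow, abs_of_pos hx, abs_of_nonneg hK]
  rw [h1]
  have h2 : (K0 x)^a ≤ (6 * Real.exp (-(x/2)) * x^(-(1/4):ℝ))^a :=
    pow_le_pow_left₀ hK hKb a
  have h3 : |x*D1 x|^b ≤ (2*Real.exp (-(x/2)))^b :=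
    pow_le_pow_left₀ (abs_nonneg _) hTb b
  have h66 : (6:ℝ)^a * 2^b ≤ 1296 := by
    calc (6:ℝ)^a * 2^b ≤ 6^a * 6^b := by
          gcongr <;> norm_num
      _ = 6^(a+b) := (pow_add 6 a b).symm
      _ = 1296 := by rw [hab]; norm_num
  have hE4 : (Real.exp (-(x/2)))^(4:ℕ) = Real.exp (-(2*x)) := by
    rw [← Real.exp_nat_mul]
    congr 1
    ring
  have hxm : x^m * (x⁻¹ + 1) = x^(m-1) + x^m := by
    have hmeq : m = (m-1) + 1 := (Nat.succ_pred_eq_of_pos hm).symm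
    rw [hmeq, pow_succ]
    field_simp
    simp only [Nat.add_sub_cancel_left, Nat.add_sub_cancel]
    ring
  calc x^m * (K0 x)^a * |x*D1 x|^b
      ≤ x^m * (6 * Real.exp (-(x/2)) * x^(-(1/4):ℝ))^a * (2*Real.exp (-(x/2)))^b := by
        apply mul_le_mul (mul_le_mul_of_nonneg_left h2 (pow_pos hx m).le) h3
          (pow_nonneg (abs_nonneg _) b) (by positivity)
    _ = (6^a * 2^b) * (x^m * ((x^(-(1/4):ℝ))^a * (Real.exp (-(x/2)))^(a+b))) := by
        rw [mul_pow, mul_pow, mul_pow, pow_add]; ring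
    _ ≤ 1296 * (x^m * ((x⁻¹ + 1) * (Real.exp (-(x/2)))^(4:ℕ))) := by
        rw [hab]
        apply mul_le_mul h66 ?_ (by positivity) (by norm_num)
        apply mul_le_mul_of_nonneg_left ?_ (pow_pos hx m).le
        exact mul_le_mul_of_nonneg_right (rpow_quarter_le hx (by omega))
          (pow_nonneg hE.le 4)
    _ = 1296 * ((x^(m-1) + x^m) * Real.exp (-(2*x))) := by
        rw [hE4, show x^m * ((x⁻¹+1) * Real.exp (-(2*x)))
          = (x^m * (x⁻¹+1)) * Real.exp (-(2*x)) by ring, hxm]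

lemma intPowExp (m : ℕ) : IntegrableOn (fun x => x^m * Real.exp (-(2*x))) (Ioi (0:ℝ)) := by
  have hcont : Continuous (fun x : ℝ => x^m * Real.exp (-(2*x))) := by continuity
  apply Integrable.mono' (g := fun x => (m.factorial : ℝ) * Real.exp (-1*x))
    ((exp_neg_integrableOn_Ioi 0 one_pos).const_mul _)
    hcont.aestronglyMeasurable.restrict
  filter_upwards [ae_restrict_mem measurableSet_Ioi] with x hxx
  have hx : 0 < x := hxx
  rw [Real.norm_eq_abs, abs_mul, abs_pow, abs_of_pos hx, abs_of_pos (Real.exp_pos _)]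
  have he : Real.exp (-(2*x)) = Real.exp (-(1*x)) * Real.exp (-(1*x)) := by
    rw [← Real.exp_add]; congr 1; ring
  rw [he, ← mul_assoc]
  have h1 : x^m * Real.exp (-(1*x)) ≤ m.factorial / 1^m :=
    pow_mul_exp_neg_le one_pos m hx.le
  calc x^m * Real.exp (-(1*x)) * Real.exp (-(1*x))
      ≤ (m.factorial / 1^m) * Real.exp (-(1*x)) :=
        mul_le_mul_of_nonneg_right h1 (Real.exp_pos _).le
    _ = (m.factorial : ℝ) * Real.exp (-1*x) := by norm_num

lemma contOn_K0 : ContinuousOn K0 (Ioi (0:ℝ)) :=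
  fun x hx => ((hasDerivAt_K0 (hx : (0:ℝ) < x)).continuousAt).continuousWithinAt

lemma contOn_D1 : ContinuousOn D1 (Ioi (0:ℝ)) :=
  fun x hx => ((hasDerivAt_D1 (hx : (0:ℝ) < x)).continuousAt).continuousWithinAt

lemma contOn_mom (a b m : ℕ) :
    ContinuousOn (fun x => x^m * K0 x^a * (x*D1 x)^b) (Ioi (0:ℝ)) :=
  (((continuous_pow m).continuousOn).mul (contOn_K0.pow a)).mul
    ((continuousOn_id.mul contOn_D1).pow b)

lemma integrable_mom {a b : ℕ} (hab : a + b = 4) {m : ℕ} (hm : 1 ≤ m) :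
    IntegrableOn (fun x => x^m * K0 x^a * (x*D1 x)^b) (Ioi (0:ℝ)) := by
  have hs : IntegrableOn (fun x => x^(m-1)*Real.exp (-(2*x)) + x^m*Real.exp (-(2*x)))
      (Ioi (0:ℝ)) := (intPowExp (m-1)).add (intPowExp m)
  have hsc : IntegrableOn (fun x => (1296:ℝ) * (x^(m-1)*Real.exp (-(2*x))
      + x^m*Real.exp (-(2*x)))) (Ioi (0:ℝ)) := hs.const_mul 1296
  apply Integrable.mono'
    (g := fun x => 1296 * ((x^(m-1) + x^m) * Real.exp (-(2*x))))
    (hsc.congr_fun (fun x _ => by ring) measurableSet_Ioi)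
    ((contOn_mom a b m).aestronglyMeasurable measurableSet_Ioi)
  filter_upwards [ae_restrict_mem measurableSet_Ioi] with x hxx
  exact mom_bound hab hm hxx

lemma tendsto_mom_zero {a b : ℕ} (hab : a + b = 4) {m : ℕ} (hm : 2 ≤ m) :
    Tendsto (fun x => x^m * K0 x^a * (x*D1 x)^b) (𝓝[>] (0:ℝ)) (𝓝 0) := by
  have hc : Continuous (fun x : ℝ => 1296 * ((x^(m-1) + x^m) * Real.exp (-(2*x)))) := by
    continuity
  have hbt : Tendsto (fun x : ℝ => 1296 * ((x^(m-1) + x^m) * Real.exp (-(2*x))))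
      (𝓝[>] (0:ℝ)) (𝓝 0) := by
    have h5 := (hc.tendsto 0).mono_left (nhdsWithin_le_nhds (s := Ioi (0:ℝ)))
    convert h5 using 2
    rw [zero_pow (by omega : m - 1 ≠ 0), zero_pow (by omega : m ≠ 0)]
    norm_num
  apply squeeze_zero_norm' ?_ hbt
  filter_upwards [self_mem_nhdsWithin] with x hx
  exact mom_bound hab (by omega) hx

lemma tendsto_pow_exp_two (j : ℕ) :
    Tendsto (fun x : ℝ => x^j * Real.exp (-(2*x))) atTop (𝓝 0) := by
  have h1 := (Real.tendsto_pow_mul_exp_neg_atTop_nhds_zero j).comp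
    (Tendsto.const_mul_atTop two_pos (tendsto_id (α := ℝ)))
  have h2 := h1.const_mul ((2:ℝ)^j)⁻¹
  rw [mul_zero] at h2
  apply h2.congr
  intro x
  simp only [Function.comp_def, id]
  rw [mul_pow]
  field_simp

lemma tendsto_mom_atTop {a b : ℕ} (hab : a + b = 4) {m : ℕ} (hm : 1 ≤ m) :
    Tendsto (fun x => x^m * K0 x^a * (x*D1 x)^b) atTop (𝓝 0) := by
  have hbt : Tendsto (fun x : ℝ => 1296 * ((x^(m-1) + x^m) * Real.exp (-(2*x))))
      atTop (𝓝 0) := by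
    have h5 := ((tendsto_pow_exp_two (m-1)).add (tendsto_pow_exp_two m)).const_mul (1296:ℝ)
    rw [add_zero, mul_zero] at h5
    apply h5.congr
    intro x
    ring
  apply squeeze_zero_norm' ?_ hbt
  filter_upwards [eventually_gt_atTop (0:ℝ)] with x hx
  exact mom_bound hab hm hx

/-- Moments `Pm a b n = ∫₀^∞ xⁿ K0(x)^a (x K0'(x))^b dx`. -/
noncomputable def Pm (a b n : ℕ) : ℝ :=
  ∫ x in Ioi (0:ℝ), x^n * K0 x^a * (x*D1 x)^b

lemma hasDerivAt_theta {x : ℝ} (hx : 0 < x) :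
    HasDerivAt (fun y => y * D1 y) (x * K0 x) x := by
  have h := (hasDerivAt_id x).mul (hasDerivAt_D1 hx)
  have hode := bessel_ode hx
  refine h.congr_deriv ?_
  simp only [id]
  linarith

/-- Integration by parts for the moments. -/
lemma ibp {a b : ℕ} (hab : a + b = 4) {n : ℕ} (hn : 1 ≤ n) :
    ((n:ℝ)+1) * Pm a b n + (a:ℝ) * Pm (a-1) (b+1) n + (b:ℝ) * Pm (a+1) (b-1) (n+2) = 0 := by
  have hi1 : IntegrableOn (fun x => ((n:ℝ)+1) * (x^n * K0 x^a * (x*D1 x)^b)) (Ioi (0:ℝ)) :=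
    (integrable_mom hab hn).const_mul _
  have hi2 : IntegrableOn (fun x => (a:ℝ) * (x^n * K0 x^(a-1) * (x*D1 x)^(b+1)))
      (Ioi (0:ℝ)) := by
    rcases Nat.eq_zero_or_pos a with ha | ha
    · subst ha
      have : (fun x => ((0:ℕ):ℝ) * (x^n * K0 x^(0-1) * (x*D1 x)^(b+1)))
          = fun _ => (0:ℝ) := by funext x; simp
      rw [this]
      exact integrable_zero _ _ _
    · exact (integrable_mom (by omega) hn).const_mul _
  have hi3 : IntegrableOn (fun x => (b:ℝ) * (x^(n+2) * K0 x^(a+1) * (x*D1 x)^(b-1)))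
      (Ioi (0:ℝ)) := by
    rcases Nat.eq_zero_or_pos b with hb | hb
    · subst hb
      have : (fun x => ((0:ℕ):ℝ) * (x^(n+2) * K0 x^(a+1) * (x*D1 x)^(0-1)))
          = fun _ => (0:ℝ) := by funext x; simp
      rw [this]
      exact integrable_zero _ _ _
    · exact (integrable_mom (by omega) (by omega)).const_mul _
  have hi12 : IntegrableOn (fun x => ((n:ℝ)+1) * (x^n * K0 x^a * (x*D1 x)^b)
      + (a:ℝ) * (x^n * K0 x^(a-1) * (x*D1 x)^(b+1))) (Ioi (0:ℝ)) := hi1.add hi2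
  have hint : IntegrableOn (fun x => ((n:ℝ)+1) * (x^n * K0 x^a * (x*D1 x)^b)
      + (a:ℝ) * (x^n * K0 x^(a-1) * (x*D1 x)^(b+1))
      + (b:ℝ) * (x^(n+2) * K0 x^(a+1) * (x*D1 x)^(b-1))) (Ioi (0:ℝ)) := hi12.add hi3
  have key : ∫ x in Ioi (0:ℝ), (((n:ℝ)+1) * (x^n * K0 x^a * (x*D1 x)^b)
      + (a:ℝ) * (x^n * K0 x^(a-1) * (x*D1 x)^(b+1))
      + (b:ℝ) * (x^(n+2) * K0 x^(a+1) * (x*D1 x)^(b-1))) = 0 := by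
    have hd : ∀ x ∈ Ioi (0:ℝ), HasDerivAt (fun y => y^(n+1) * K0 y^a * (y*D1 y)^b)
        (((n:ℝ)+1) * (x^n * K0 x^a * (x*D1 x)^b)
          + (a:ℝ) * (x^n * K0 x^(a-1) * (x*D1 x)^(b+1))
          + (b:ℝ) * (x^(n+2) * K0 x^(a+1) * (x*D1 x)^(b-1))) x := by
      intro x hx
      have hx : (0:ℝ) < x := hx
      have hP : HasDerivAt (fun y : ℝ => y^(n+1)) (((n:ℝ)+1) * x^n) x := by
        have := hasDerivAt_pow (n+1) x
        simpa using this
      have hKp : HasDerivAt (fun y => K0 y^a) ((a:ℝ) * K0 x^(a-1) * D1 x) x :=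
        (hasDerivAt_K0 hx).pow a
      have hTp : HasDerivAt (fun y => (y*D1 y)^b)
          ((b:ℝ) * (x*D1 x)^(b-1) * (x*K0 x)) x := (hasDerivAt_theta hx).pow b
      have h := (hP.fun_mul hKp).fun_mul hTp
      refine h.congr_deriv ?_
      have e1 : (x*D1 x)^(b+1) = (x*D1 x)^b * (x*D1 x) := pow_succ _ _
      have e2 : K0 x^(a+1) = K0 x^a * K0 x := pow_succ _ _
      have e3 : x^(n+2) = x^n * x * x := by ring
      have e4 : x^(n+1) = x^n * x := pow_succ _ _
      rw [e1, e2, e3, e4]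
      ring
    have h0 : Tendsto (fun y => y^(n+1) * K0 y^a * (y*D1 y)^b) (𝓝[>] (0:ℝ)) (𝓝 0) :=
      tendsto_mom_zero hab (by omega)
    have hinf : Tendsto (fun y => y^(n+1) * K0 y^a * (y*D1 y)^b) atTop (𝓝 0) :=
      tendsto_mom_atTop hab (by omega)
    rw [integral_Ioi_zero_eq hd hint h0 hinf]
    ring
  have e1 : ∫ x in Ioi (0:ℝ), (((n:ℝ)+1) * (x^n * K0 x^a * (x*D1 x)^b)
      + (a:ℝ) * (x^n * K0 x^(a-1) * (x*D1 x)^(b+1))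
      + (b:ℝ) * (x^(n+2) * K0 x^(a+1) * (x*D1 x)^(b-1)))
      = ((n:ℝ)+1) * Pm a b n + (a:ℝ) * Pm (a-1) (b+1) n
        + (b:ℝ) * Pm (a+1) (b-1) (n+2) := by
    rw [integral_add hi12 hi3, integral_add hi1 hi2,
      integral_const_mul, integral_const_mul, integral_const_mul, Pm, Pm, Pm]
  rw [← e1]
  exact key

lemma bm_eq (k : ℕ) : ((k.factorial : ℝ))^2 * besselMoment k
    = 16 * (1/2:ℝ)^(2*k+1) * Pm 4 0 (2*k+1) := by
  have hP : Pm 4 0 (2*k+1) = ∫ x in Ioi (0:ℝ), x^(2*k+1) * K0 x^4 := by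
    rw [Pm]; simp only [pow_zero, mul_one]
  have hI : ∫ x in Ioi (0:ℝ), (x/2)^(2*k+1) * K0 x^4
      = (1/2:ℝ)^(2*k+1) * ∫ x in Ioi (0:ℝ), x^(2*k+1) * K0 x^4 := by
    rw [← integral_const_mul]
    apply setIntegral_congr_fun measurableSet_Ioi
    intro x _
    show (x/2)^(2*k+1) * K0 x^4 = (1/2:ℝ)^(2*k+1) * (x^(2*k+1) * K0 x^4)
    rw [show x/2 = (1/2)*x by ring, mul_pow]
    ring
  rw [besselMoment, hP, hI]
  have hF : ((k.factorial : ℝ)) ≠ 0 := Nat.cast_ne_zero.2 k.factorial_ne_zero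
  field_simp
  ring

end BesselAux

theorem stmt4 (k : ℕ) :
    ((k:ℝ)+1)^3 * besselMoment k
      - 2*(2*(k:ℝ)+3)*(5*(k:ℝ)^2+15*(k:ℝ)+12) * besselMoment (k+1)
      + 64*((k:ℝ)+2)^3 * besselMoment (k+2) = 0 := by
  open BesselAux in
  have h40_0 := ibp (a:=4) (b:=0) (by norm_num) (n:=2*k+1) (by omega)
  open BesselAux in
  have h40_1 := ibp (a:=4) (b:=0) (by norm_num) (n:=2*k+3) (by omega)
  open BesselAux in
  have h40_2 := ibp (a:=4) (b:=0) (by norm_num) (n:=2*k+5) (by omega)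
  open BesselAux in
  have h31_0 := ibp (a:=3) (b:=1) (by norm_num) (n:=2*k+1) (by omega)
  open BesselAux in
  have h31_1 := ibp (a:=3) (b:=1) (by norm_num) (n:=2*k+3) (by omega)
  open BesselAux in
  have h22_0 := ibp (a:=2) (b:=2) (by norm_num) (n:=2*k+1) (by omega)
  open BesselAux in
  have h22_1 := ibp (a:=2) (b:=2) (by norm_num) (n:=2*k+3) (by omega)
  open BesselAux in
  have h13_0 := ibp (a:=1) (b:=3) (by norm_num) (n:=2*k+1) (by omega)
  open BesselAux in
  have h04_0 := ibp (a:=0) (b:=4) (by norm_num) (n:=2*k+1) (by omega)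
  simp only [show 2*k+1+2 = 2*k+3 from by omega, show 2*k+3+2 = 2*k+5 from by omega,
    show 2*k+5+2 = 2*k+7 from by omega] at h40_0 h40_1 h40_2 h31_0 h31_1 h22_0 h22_1 h13_0 h04_0
  norm_num at h40_0 h40_1 h40_2 h31_0 h31_1 h22_0 h22_1 h13_0 h04_0
  push_cast at h40_0 h40_1 h40_2 h31_0 h31_1 h22_0 h22_1 h13_0 h04_0
  have hR : 2*((k:ℝ)+1)^5 * BesselAux.Pm 4 0 (2*k+1)
      - (10*(k:ℝ)^3+45*(k:ℝ)^2+69*(k:ℝ)+36) * BesselAux.Pm 4 0 (2*k+3)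
      + 8*((k:ℝ)+2) * BesselAux.Pm 4 0 (2*k+5) = 0 := by
    linear_combination (((k:ℝ)+1)^4) * h40_0
      + (-(4*(k:ℝ)^2+(23/2)*(k:ℝ)+17/2)) * h40_1
      + (3/2 : ℝ) * h40_2
      + (-2*((k:ℝ)+1)^3) * h31_0
      + (3*((k:ℝ)+1)^2) * h22_0
      + (5*(k:ℝ)+7) * h31_1
      + (-3 : ℝ) * h22_1
      + (-3*((k:ℝ)+1)) * h13_0
      + (3/2 : ℝ) * h04_0
  have e0 := BesselAux.bm_eq k
  have e1 : ((k:ℝ)+1)^2*((k.factorial:ℝ))^2 * besselMoment (k+1)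
      = 4*(1/2:ℝ)^(2*k+1) * BesselAux.Pm 4 0 (2*k+3) := by
    have h := BesselAux.bm_eq (k+1)
    rw [show 2*(k+1)+1 = 2*k+1+2 from by omega, pow_add, Nat.factorial_succ] at h
    push_cast at h
    rw [show 2*k+1+2 = 2*k+3 from by omega] at h
    linear_combination h
  have e2 : ((k:ℝ)+2)^2*((k:ℝ)+1)^2*((k.factorial:ℝ))^2 * besselMoment (k+2)
      = (1/2:ℝ)^(2*k+1) * BesselAux.Pm 4 0 (2*k+5) := by
    have h := BesselAux.bm_eq (k+2)
    rw [show 2*(k+2)+1 = 2*k+1+4 from by omega, pow_add, Nat.factorial_succ,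
      Nat.factorial_succ] at h
    push_cast at h
    rw [show 2*k+1+4 = 2*k+5 from by omega] at h
    linear_combination h
  have main : (((k:ℝ)+1)^2 * ((k.factorial:ℝ))^2 / 8) *
      (((k:ℝ)+1)^3 * besselMoment k
        - 2*(2*(k:ℝ)+3)*(5*(k:ℝ)^2+15*(k:ℝ)+12) * besselMoment (k+1)
        + 64*((k:ℝ)+2)^3 * besselMoment (k+2)) = 0 := by
    linear_combination (((k:ℝ)+1)^5/8) * e0
      + (-((10*(k:ℝ)^3+45*(k:ℝ)^2+69*(k:ℝ)+36)/4)) * e1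
      + (8*((k:ℝ)+2)) * e2
      + ((1/2:ℝ)^(2*k+1)) * hR
  have hne : (((k:ℝ)+1)^2 * ((k.factorial:ℝ))^2 / 8) ≠ 0 := by
    have hF : ((k.factorial : ℝ)) ≠ 0 := Nat.cast_ne_zero.2 k.factorial_ne_zero
    positivity
  rcases mul_eq_zero.mp main with h | h
  · exact (hne h).elim
  · exact h
end

section
/- For every integer n ≥ 1, n³·∑_{m|n} ψ(m)/m³ = 48·( −σ₃(n) + 16·σ₃(n/2)·[2∣n] + 9·σ₃(n/3)·[3∣n] − 144·σ₃(n/6)·[6∣n] ), where σ₃(k) := ∑_{d|k} d³ and [d∣n] equals 1 if d divides n and 0 otherwise. Equivalently, the coefficient of qⁿ in the q-expansion of (1/5)(−E₄(q) + 16E₄(q²) + 9E₄(q³) − 144E₄(q⁶)), with E₄(q) = 1 + 240∑_{k≥1}σ₃(k)qᵏ, equals n³·∑_{m|n} ψ(m)/m³. -/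
/-- The even mod-6 character `ψ` with `ψ(1)=ψ(5)=−48`, `ψ(2)=ψ(4)=720`,
`ψ(3)=384`, `ψ(6)=−5760` (6-periodic). -/
def psi (n : ℕ) : ℤ :=
  if n % 6 = 1 then -48 else if n % 6 = 2 then 720 else if n % 6 = 3 then 384
  else if n % 6 = 4 then 720 else if n % 6 = 5 then -48 else -5760

/-- Sum of cubes of divisors: `σ₃(n) = ∑_{d|n} d³`. -/
def sigma3 (n : ℕ) : ℕ := ∑ d ∈ n.divisors, d^3

lemma psi_eq (m : ℕ) : (psi m : ℚ) =
    -48 + (if 2 ∣ m then 768 else 0) + (if 3 ∣ m then 432 else 0)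
      + (if 6 ∣ m then -6912 else 0) := by
  have h2 : 2 ∣ m ↔ m % 6 = 0 ∨ m % 6 = 2 ∨ m % 6 = 4 := by omega
  have h3 : 3 ∣ m ↔ m % 6 = 0 ∨ m % 6 = 3 := by omega
  have h6 : 6 ∣ m ↔ m % 6 = 0 := by omega
  have h : m % 6 = 0 ∨ m % 6 = 1 ∨ m % 6 = 2 ∨ m % 6 = 3 ∨ m % 6 = 4 ∨ m % 6 = 5 := by
    omega
  rcases h with h|h|h|h|h|h <;> simp [psi, h2, h3, h6, h] <;> norm_num

lemma key (k n : ℕ) (hk : k ≠ 0) (hn : n ≠ 0) :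
    ∑ m ∈ n.divisors, (if k ∣ m then ((n / m : ℕ) : ℚ)^3 else 0) =
      if k ∣ n then (sigma3 (n / k) : ℚ) else 0 := by
  by_cases hkn : k ∣ n
  · rw [if_pos hkn]
    rw [← Nat.sum_div_divisors n (fun m => if k ∣ m then ((n / m : ℕ) : ℚ)^3 else 0)]
    have : ∀ d ∈ n.divisors,
        (if k ∣ n / d then ((n / (n / d) : ℕ) : ℚ)^3 else 0) =
        (if d ∣ n / k then ((d : ℕ) : ℚ)^3 else 0) := by
      intro d hd
      obtain ⟨hdn, -⟩ := Nat.mem_divisors.mp hd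
      rw [Nat.div_div_self hdn hn]
      congr 1
      rw [Nat.dvd_div_iff_mul_dvd hdn, Nat.dvd_div_iff_mul_dvd hkn, mul_comm]
    rw [Finset.sum_congr rfl this, ← Finset.sum_filter,
      Nat.divisors_filter_dvd_of_dvd hn (Nat.div_dvd_of_dvd hkn)]
    simp [sigma3]
  · rw [if_neg hkn]
    apply Finset.sum_eq_zero
    intro m hm
    obtain ⟨hmn, -⟩ := Nat.mem_divisors.mp hm
    rw [if_neg fun hkm => hkn (hkm.trans hmn)]

theorem stmt6 (n : ℕ) (hn : 1 ≤ n) :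
    (n:ℚ)^3 * ∑ m ∈ n.divisors, (psi m : ℚ) / (m:ℚ)^3 =
    48 * (-(sigma3 n : ℚ)
      + 16 * (if 2 ∣ n then (sigma3 (n/2) : ℚ) else 0)
      + 9 * (if 3 ∣ n then (sigma3 (n/3) : ℚ) else 0)
      - 144 * (if 6 ∣ n then (sigma3 (n/6) : ℚ) else 0)) := by
  have hn0 : n ≠ 0 := by omega
  have step1 : (n:ℚ)^3 * ∑ m ∈ n.divisors, (psi m : ℚ) / (m:ℚ)^3 =
      ∑ m ∈ n.divisors, (psi m : ℚ) * ((n / m : ℕ) : ℚ)^3 := by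
    rw [Finset.mul_sum]
    refine Finset.sum_congr rfl fun m hm => ?_
    obtain ⟨hmn, -⟩ := Nat.mem_divisors.mp hm
    have hm0 : m ≠ 0 := by
      rintro rfl; exact hn0 (Nat.eq_zero_of_zero_dvd hmn)
    have hmQ : (m : ℚ) ≠ 0 := Nat.cast_ne_zero.mpr hm0
    rw [Nat.cast_div hmn hmQ]
    field_simp
  rw [step1]
  have expand : ∀ m ∈ n.divisors, (psi m : ℚ) * ((n / m : ℕ) : ℚ)^3 =
      -48 * ((n / m : ℕ) : ℚ)^3
      + 768 * (if 2 ∣ m then ((n / m : ℕ) : ℚ)^3 else 0)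
      + 432 * (if 3 ∣ m then ((n / m : ℕ) : ℚ)^3 else 0)
      + (-6912) * (if 6 ∣ m then ((n / m : ℕ) : ℚ)^3 else 0) := by
    intro m _
    rw [psi_eq]
    by_cases h2 : 2 ∣ m <;> by_cases h3 : 3 ∣ m <;> by_cases h6 : 6 ∣ m <;>
      simp [h2, h3, h6] <;> ring
  rw [Finset.sum_congr rfl expand]
  simp only [Finset.sum_add_distrib, ← Finset.mul_sum]
  rw [key 2 n (by norm_num) hn0, key 3 n (by norm_num) hn0, key 6 n (by norm_num) hn0]
  have : ∑ m ∈ n.divisors, ((n / m : ℕ) : ℚ)^3 = (sigma3 n : ℚ) := by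
    rw [Nat.sum_div_divisors n fun d => (d : ℚ)^3]
    simp [sigma3]
  rw [this]
  ring
end
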